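/- arXiv:2605.07049 — 7 statements merged into one kernel-verified Lean document; each statement's English description precedes it below -/
import Mathlib

section
/- Let K and B be positive integers with B dividing K, and for k ∈ {1,…,K} let [k] := B·⌊(k−1)/B⌋ + 1. Let X be a countable set, let p_1,…,p_K and μ be probability mass functions on X, and let C > 0 satisfy p_k(x) ≤ C·μ(x) for all k and x. Then for any functions f^(1),…,f^(K) : X → [0,1] and any real λ ≥ 1, ∑_{k=1}^K ∑_{x∈X} p_k(x)·f^(k)(x) ≤ C·B·log₂(1 + C·K/λ) + √( 4·C·log(1 + C·K/λ) · [ 2·K·λ + ∑_{k=1}^K ∑_{t<[k]} ∑_{x∈X} p_t(x)·f^(k)(x)² ] ), where the inner sum over t < [k] ranges over all episodes t strictly before the batch start [k]. -/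
open scoped BigOperators

noncomputable section

set_option maxHeartbeats 1000000

/-- Batch start of episode `k` under fixed batch size `B`:
`[k] := B * ⌊(k-1)/B⌋ + 1`. -/
def batchStart (B k : ℕ) : ℕ := B * ((k - 1) / B) + 1

lemma chord (r : ℝ) (h0 : 0 ≤ r) (h1 : r ≤ 1) : r * Real.log 2 ≤ Real.log (1 + r) := by
  have hexp : Real.exp (r * Real.log 2) ≤ 1 + r := by
    have hc := convexOn_exp.2 (Set.mem_univ (0:ℝ)) (Set.mem_univ (Real.log 2))
      (by linarith : (0:ℝ) ≤ 1 - r) h0 (by ring)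
    simp only [smul_eq_mul, mul_zero, zero_add, Real.exp_zero] at hc
    rw [Real.exp_log (by norm_num)] at hc
    calc Real.exp (r * Real.log 2) ≤ (1-r) * 1 + r * 2 := by simpa [smul_eq_mul] using hc
      _ = 1 + r := by ring
  calc r * Real.log 2 = Real.log (Real.exp (r * Real.log 2)) := (Real.log_exp _).symm
    _ ≤ Real.log (1 + r) := Real.log_le_log (Real.exp_pos _) hexp

lemma sum_batches (F : ℕ → ℝ) (B : ℕ) : ∀ M : ℕ,
    ∑ k ∈ Finset.Ico 1 (M*B+1), F k
      = ∑ j ∈ Finset.range M, ∑ k ∈ Finset.Ico (j*B+1) (j*B+B+1), F k := by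
  intro M
  induction M with
  | zero => simp
  | succ M ih =>
    have e : (M+1)*B = M*B + B := by ring
    rw [Finset.sum_range_succ, ← ih, e, ← Finset.sum_Ico_consecutive F
      (by omega : 1 ≤ M*B+1) (by omega : M*B+1 ≤ M*B+B+1)]

lemma doubling (D : ℕ → ℝ) (M : ℕ)
    (h : ∀ j < M, D j ≤ D (j+1)) (h2 : ∀ j < M, D j < D (j+1) - D j → 2 * D j ≤ D (j+1)) :
    (2:ℝ)^(((Finset.range M).filter (fun j => D j < D (j+1) - D j)).card) * D 0 ≤ D M := by
  induction M with
  | zero => simp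
  | succ M ih =>
    have hM : ∀ j < M, D j ≤ D (j+1) := fun j hj => h j (by omega)
    have hM2 : ∀ j < M, D j < D (j+1) - D j → 2 * D j ≤ D (j+1) := fun j hj => h2 j (by omega)
    have ih' := ih hM hM2
    rw [Finset.range_add_one, Finset.filter_insert]
    by_cases hb : D M < D (M+1) - D M
    · rw [if_pos hb, Finset.card_insert_of_notMem (by simp)]
      have h3 := h2 M (by omega) hb
      have h2pow : (0:ℝ) < 2^(((Finset.range M).filter (fun j => D j < D (j+1) - D j)).card) := by positivity
      calc (2:ℝ)^(_+1) * D 0 = 2 * ((2:ℝ)^(((Finset.range M).filter (fun j => D j < D (j+1) - D j)).card) * D 0) := by ring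
        _ ≤ 2 * D M := by nlinarith
        _ ≤ D (M+1) := h3
    · rw [if_neg hb]
      exact le_trans ih' (h M (by omega))

lemma perx (M B : ℕ) (hB : 0 < B) (C lam u ε : ℝ) (hC : 0 < C)
    (hlam : 1 ≤ lam) (hu : 0 ≤ u) (hε : 0 < ε)
    (a g : ℕ → ℝ)
    (ha0 : ∀ k ∈ Finset.Icc 1 (M*B), 0 ≤ a k)
    (ha1 : ∀ k ∈ Finset.Icc 1 (M*B), a k ≤ C*u)
    (hg0 : ∀ k ∈ Finset.Icc 1 (M*B), 0 ≤ g k)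
    (hg1 : ∀ k ∈ Finset.Icc 1 (M*B), g k ≤ 1) :
    ∑ k ∈ Finset.Icc 1 (M*B), a k * g k ≤
      C*B*Real.logb 2 (1+C*(M*B)/lam) * u
      + C*Real.log (1+C*(M*B)/lam)/(2*ε*Real.log 2) * u
      + (ε/2) * ∑ k ∈ Finset.Icc 1 (M*B),
          ((∑ t ∈ Finset.Ico 1 (batchStart B k), a t) + lam*u) * (g k)^2 := by
  -- basic facts about membership
  have hmem : ∀ j, j < M → ∀ k ∈ Finset.Ico (j*B+1) (j*B+B+1), k ∈ Finset.Icc 1 (M*B) := by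
    intro j hj k hk
    rw [Finset.mem_Ico] at hk
    rw [Finset.mem_Icc]
    have : j*B+B ≤ M*B := by
      have : (j+1)*B ≤ M*B := Nat.mul_le_mul_right B (by omega)
      nlinarith
    omega
  have hbs : ∀ j, ∀ k ∈ Finset.Ico (j*B+1) (j*B+B+1), batchStart B k = j*B+1 := by
    intro j k hk
    rw [Finset.mem_Ico] at hk
    have hdiv : (k-1)/B = j := by
      have h1 : j*B ≤ k-1 := by omega
      have h2 : k-1 < (j+1)*B := by
        have : (j+1)*B = j*B+B := by ring
        omega
      exact Nat.div_eq_of_lt_le h1 h2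
    simp [batchStart, hdiv, Nat.mul_comm]
  rcases eq_or_lt_of_le hu with hu0 | hu0
  · -- u = 0 case
    have haz : ∀ k ∈ Finset.Icc 1 (M*B), a k = 0 := fun k hk =>
      le_antisymm (by have := ha1 k hk; rw [← hu0] at this; linarith) (ha0 k hk)
    have hL : ∑ k ∈ Finset.Icc 1 (M*B), a k * g k = 0 :=
      Finset.sum_eq_zero (fun k hk => by rw [haz k hk]; ring)
    rw [hL, ← hu0]
    have h3 : 0 ≤ (ε/2) * ∑ k ∈ Finset.Icc 1 (M*B),
        ((∑ t ∈ Finset.Ico 1 (batchStart B k), a t) + lam*0) * (g k)^2 := by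
      apply mul_nonneg (by positivity)
      apply Finset.sum_nonneg
      intro k hk
      apply mul_nonneg _ (sq_nonneg _)
      have hq : 0 ≤ ∑ t ∈ Finset.Ico 1 (batchStart B k), a t := by
        apply Finset.sum_nonneg
        intro t ht
        apply ha0
        rw [Finset.mem_Ico] at ht
        rw [Finset.mem_Icc] at hk ⊢
        have hle : batchStart B k ≤ k := by
          have := Nat.div_mul_le_self (k-1) B
          simp only [batchStart]
          have : B * ((k-1)/B) ≤ k - 1 := by
            rw [Nat.mul_comm]; exact Nat.div_mul_le_self (k-1) B
          omega
        omega
      linarith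
    simp only [mul_zero, zero_mul, zero_add, add_zero] at *
    linarith
  -- u > 0 case
  set D : ℕ → ℝ := fun j => (∑ t ∈ Finset.Ico 1 (j*B+1), a t) + lam*u with hD
  have hD0 : D 0 = lam*u := by simp [hD]
  have hstep : ∀ j, D (j+1) = D j + ∑ t ∈ Finset.Ico (j*B+1) (j*B+B+1), a t := by
    intro j
    have e : (j+1)*B = j*B + B := by ring
    simp only [hD, e]
    rw [← Finset.sum_Ico_consecutive a (by omega : 1 ≤ j*B+1) (by omega : j*B+1 ≤ j*B+B+1)]
    ring
  have hDpos : ∀ j ≤ M, 0 < D j := by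
    intro j hj
    have hq : 0 ≤ ∑ t ∈ Finset.Ico 1 (j*B+1), a t := by
      apply Finset.sum_nonneg
      intro t ht
      rw [Finset.mem_Ico] at ht
      apply ha0
      rw [Finset.mem_Icc]
      have : j*B ≤ M*B := Nat.mul_le_mul_right B hj
      omega
    have : 0 < lam*u := by nlinarith
    simp only [hD]; linarith
  have hΔnonneg : ∀ j < M, 0 ≤ D (j+1) - D j := by
    intro j hj
    rw [hstep j]
    have : 0 ≤ ∑ t ∈ Finset.Ico (j*B+1) (j*B+B+1), a t :=
      Finset.sum_nonneg (fun t ht => ha0 t (hmem j hj t ht))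
    linarith
  have hΔle : ∀ j < M, D (j+1) - D j ≤ B*(C*u) := by
    intro j hj
    rw [hstep j]
    have : ∑ t ∈ Finset.Ico (j*B+1) (j*B+B+1), a t ≤ (Finset.Ico (j*B+1) (j*B+B+1)).card • (C*u) :=
      Finset.sum_le_card_nsmul _ _ _ (fun t ht => ha1 t (hmem j hj t ht))
    rw [Nat.card_Ico] at this
    have e : j*B+B+1 - (j*B+1) = B := by omega
    rw [e, nsmul_eq_mul] at this
    linarith
  have hDmono : ∀ j < M, D j ≤ D (j+1) := fun j hj => by linarith [hΔnonneg j hj]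
  have hDM : D M ≤ (M*B)*(C*u) + lam*u := by
    have : ∑ t ∈ Finset.Ico 1 (M*B+1), a t ≤ (Finset.Ico 1 (M*B+1)).card • (C*u) := by
      apply Finset.sum_le_card_nsmul
      intro t ht
      rw [Finset.mem_Ico] at ht
      exact ha1 t (Finset.mem_Icc.2 (by omega))
    rw [Nat.card_Ico, nsmul_eq_mul] at this
    simp only [hD]
    push_cast at this ⊢
    linarith
  have hlampos : 0 < lam := by linarith
  have hlogb2 : (0:ℝ) < Real.log 2 := Real.log_pos (by norm_num)
  set m : ℕ := ((Finset.range M).filter (fun j => D j < D (j+1) - D j)).card with hm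
  have hdbl := doubling D M hDmono (by
    intro j hj hb
    rw [hstep j] at hb ⊢
    linarith)
  have hratio : 1 + C*(M*B)/lam > 0 := by positivity
  have hmle : (m:ℝ) ≤ Real.logb 2 (1 + C*(M*B)/lam) := by
    have h2m : (2:ℝ)^m ≤ 1 + C*(M*B)/lam := by
      rw [hD0] at hdbl
      have hkey : (2:ℝ)^m * (lam*u) ≤ ((M:ℝ)*B)*(C*u) + lam*u := le_trans hdbl hDM
      rw [← sub_nonneg]
      have he : 1 + C*(M*B)/lam - (2:ℝ)^m = (((M:ℝ)*B)*(C*u) + lam*u - (2:ℝ)^m * (lam*u))/(lam*u) := by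
        field_simp
        ring
      rw [he]
      apply div_nonneg _ (by positivity)
      linarith [hkey]
    calc (m:ℝ) = Real.logb 2 ((2:ℝ)^m) := by
          rw [Real.logb_pow, Real.logb_self_eq_one (by norm_num)]; ring
      _ ≤ Real.logb 2 (1 + C*(M*B)/lam) :=
          Real.logb_le_logb_of_le (by norm_num) (by positivity) h2m
  have htel : ∑ j ∈ Finset.range M, (Real.log (D (j+1)) - Real.log (D j))
      = Real.log (D M) - Real.log (D 0) := Finset.sum_range_sub (fun j => Real.log (D j)) M
  have hlogDM : Real.log (D M) - Real.log (D 0) ≤ Real.log (1 + C*(M*B)/lam) := by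
    have h1 : D M ≤ (1 + C*(M*B)/lam) * (lam*u) := by
      have : (1 + C*(M*B)/lam) * (lam*u) = (M*B)*(C*u) + lam*u := by
        field_simp; ring
      rw [this]; exact hDM
    have h2 : Real.log (D M) ≤ Real.log ((1 + C*(M*B)/lam) * (lam*u)) :=
      Real.log_le_log (hDpos M le_rfl) h1
    rw [Real.log_mul (ne_of_gt hratio) (ne_of_gt (by positivity : (0:ℝ) < lam*u))] at h2
    rw [hD0]
    linarith
  -- per-batch bound
  have hj : ∀ j < M, ∑ k ∈ Finset.Ico (j*B+1) (j*B+B+1), a k * g k ≤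
      (if D j < D (j+1) - D j then C*B*u else 0)
      + C*u/(2*ε*Real.log 2) * (Real.log (D (j+1)) - Real.log (D j))
      + (ε/2) * ∑ k ∈ Finset.Ico (j*B+1) (j*B+B+1), D j * (g k)^2 := by
    intro j hjM
    have hDj := hDpos j (le_of_lt hjM)
    have hDj1 := hDpos (j+1) hjM
    have hlogd : 0 ≤ Real.log (D (j+1)) - Real.log (D j) := by
      have := Real.log_le_log hDj (hDmono j hjM)
      linarith
    have hterm3 : 0 ≤ (ε/2) * ∑ k ∈ Finset.Ico (j*B+1) (j*B+B+1), D j * (g k)^2 := by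
      apply mul_nonneg (by positivity)
      exact Finset.sum_nonneg (fun k hk => mul_nonneg (le_of_lt hDj) (sq_nonneg _))
    by_cases hb : D j < D (j+1) - D j
    · rw [if_pos hb]
      have h1 : ∑ k ∈ Finset.Ico (j*B+1) (j*B+B+1), a k * g k ≤
          ∑ k ∈ Finset.Ico (j*B+1) (j*B+B+1), a k := by
        apply Finset.sum_le_sum
        intro k hk
        have := hmem j hjM k hk
        exact mul_le_of_le_one_right (ha0 k this) (hg1 k this)
      have h2 : ∑ k ∈ Finset.Ico (j*B+1) (j*B+B+1), a k ≤ B*(C*u) := by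
        have := hΔle j hjM
        rw [hstep j] at this
        linarith
      have hpos2 : 0 ≤ C*u/(2*ε*Real.log 2) * (Real.log (D (j+1)) - Real.log (D j)) := by
        apply mul_nonneg (by positivity) hlogd
      have hBC : ↑B*(C*u) = C*↑B*u := by ring
      linarith [hterm3]
    · rw [if_neg hb]
      push_neg at hb
      rw [zero_add]
      have hamgm : ∀ k ∈ Finset.Ico (j*B+1) (j*B+B+1),
          a k * g k ≤ (C*u) * a k / (2*ε*D j) + (ε/2) * (D j * (g k)^2) := by
        intro k hk
        have hkm := hmem j hjM k hk
        have ha0k := ha0 k hkm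
        have ha1k := ha1 k hkm
        have h2' : (0:ℝ) < 2*ε*D j := by positivity
        have he : (ε/2) * (D j * (g k)^2) = (ε^2*(D j)^2*(g k)^2)/(2*ε*D j) := by
          field_simp
        rw [he, ← add_div, le_div_iff₀ h2']
        nlinarith [sq_nonneg (a k - ε*D j*g k), mul_le_mul_of_nonneg_right ha1k ha0k]
      have hsum := Finset.sum_le_sum hamgm
      rw [Finset.sum_add_distrib] at hsum
      have hΔ : ∑ k ∈ Finset.Ico (j*B+1) (j*B+B+1), a k = D (j+1) - D j := by
        rw [hstep j]; ring
      have hfirst : ∑ k ∈ Finset.Ico (j*B+1) (j*B+B+1), (C*u)*a k/(2*ε*D j)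
          = (C*u)*(D (j+1) - D j)/(2*ε*D j) := by
        rw [← Finset.sum_div, ← Finset.mul_sum, hΔ]
      have hsecond : ∑ k ∈ Finset.Ico (j*B+1) (j*B+B+1), (ε/2) * (D j * (g k)^2)
          = (ε/2) * ∑ k ∈ Finset.Ico (j*B+1) (j*B+B+1), D j * (g k)^2 := by
        rw [Finset.mul_sum]
      rw [hfirst, hsecond] at hsum
      have hratio' : (D (j+1) - D j) * Real.log 2 ≤ (Real.log (D (j+1)) - Real.log (D j)) * D j := by
        have h0r : 0 ≤ (D (j+1) - D j)/D j := div_nonneg (hΔnonneg j hjM) (le_of_lt hDj)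
        have h1r : (D (j+1) - D j)/D j ≤ 1 := (div_le_one hDj).2 hb
        have hch := chord _ h0r h1r
        have he2 : 1 + (D (j+1) - D j)/D j = D (j+1)/D j := by field_simp; ring
        rw [he2, Real.log_div (ne_of_gt hDj1) (ne_of_gt hDj)] at hch
        rw [div_mul_eq_mul_div, div_le_iff₀ hDj] at hch
        linarith
      have hmain : (C*u)*(D (j+1) - D j)/(2*ε*D j)
          ≤ C*u/(2*ε*Real.log 2) * (Real.log (D (j+1)) - Real.log (D j)) := by
        rw [div_mul_eq_mul_div, div_le_div_iff₀ (by positivity) (by positivity)]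
        have h4 : (0:ℝ) ≤ 2*ε*(C*u) := by positivity
        nlinarith [mul_le_mul_of_nonneg_left hratio' h4]
      linarith
  -- assemble
  have hIcc : Finset.Icc 1 (M*B) = Finset.Ico 1 (M*B+1) := by
    rw [Finset.Ico_add_one_right_eq_Icc]
  have hLHS : ∑ k ∈ Finset.Icc 1 (M*B), a k * g k
      = ∑ j ∈ Finset.range M, ∑ k ∈ Finset.Ico (j*B+1) (j*B+B+1), a k * g k := by
    rw [hIcc, sum_batches]
  have hT : ∑ k ∈ Finset.Icc 1 (M*B),
        ((∑ t ∈ Finset.Ico 1 (batchStart B k), a t) + lam*u) * (g k)^2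
      = ∑ j ∈ Finset.range M, ∑ k ∈ Finset.Ico (j*B+1) (j*B+B+1), D j * (g k)^2 := by
    rw [hIcc, sum_batches]
    apply Finset.sum_congr rfl
    intro j hjr
    apply Finset.sum_congr rfl
    intro k hk
    rw [hbs j k hk]
  have hstep2 : ∑ j ∈ Finset.range M, ∑ k ∈ Finset.Ico (j*B+1) (j*B+B+1), a k * g k ≤
      ∑ j ∈ Finset.range M, ((if D j < D (j+1) - D j then C*B*u else 0)
        + C*u/(2*ε*Real.log 2) * (Real.log (D (j+1)) - Real.log (D j))
        + (ε/2) * ∑ k ∈ Finset.Ico (j*B+1) (j*B+B+1), D j * (g k)^2) := by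
    apply Finset.sum_le_sum
    intro j hjr
    exact hj j (Finset.mem_range.1 hjr)
  have hsplit : ∑ j ∈ Finset.range M, ((if D j < D (j+1) - D j then C*B*u else 0)
        + C*u/(2*ε*Real.log 2) * (Real.log (D (j+1)) - Real.log (D j))
        + (ε/2) * ∑ k ∈ Finset.Ico (j*B+1) (j*B+B+1), D j * (g k)^2)
      = (∑ j ∈ Finset.range M, (if D j < D (j+1) - D j then C*B*u else 0))
        + C*u/(2*ε*Real.log 2) * (∑ j ∈ Finset.range M, (Real.log (D (j+1)) - Real.log (D j)))
        + (ε/2) * ∑ j ∈ Finset.range M, ∑ k ∈ Finset.Ico (j*B+1) (j*B+B+1), D j * (g k)^2 := by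
    rw [Finset.sum_add_distrib, Finset.sum_add_distrib, Finset.mul_sum, Finset.mul_sum]
  have hite : (∑ j ∈ Finset.range M, (if D j < D (j+1) - D j then C*B*u else 0))
      = (m:ℝ) * (C*B*u) := by
    rw [← Finset.sum_filter, Finset.sum_const, hm, nsmul_eq_mul]
  have hCBu : (0:ℝ) ≤ C*B*u := by positivity
  have hb1 : (m:ℝ) * (C*B*u) ≤ C*B*Real.logb 2 (1+C*(M*B)/lam) * u := by
    have := mul_le_mul_of_nonneg_right hmle hCBu
    calc (m:ℝ) * (C*B*u) ≤ Real.logb 2 (1+C*(M*B)/lam) * (C*B*u) := this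
      _ = C*B*Real.logb 2 (1+C*(M*B)/lam) * u := by ring
  have hb2 : C*u/(2*ε*Real.log 2) * (∑ j ∈ Finset.range M, (Real.log (D (j+1)) - Real.log (D j)))
      ≤ C*Real.log (1+C*(M*B)/lam)/(2*ε*Real.log 2) * u := by
    rw [htel]
    have h5 : (0:ℝ) ≤ C*u/(2*ε*Real.log 2) := by positivity
    calc C*u/(2*ε*Real.log 2) * (Real.log (D M) - Real.log (D 0))
        ≤ C*u/(2*ε*Real.log 2) * Real.log (1+C*(M*B)/lam) :=
          mul_le_mul_of_nonneg_left hlogDM h5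
      _ = C*Real.log (1+C*(M*B)/lam)/(2*ε*Real.log 2) * u := by ring
  rw [hLHS, hT]
  calc ∑ j ∈ Finset.range M, ∑ k ∈ Finset.Ico (j*B+1) (j*B+B+1), a k * g k
      ≤ _ := hstep2
    _ = _ := hsplit
    _ ≤ _ := by rw [hite]; linarith [hb1, hb2]

/-- Lemma C.1 of the paper: the key batched coverability inequality. -/
theorem batched_coverability
    {X : Type*} [Countable X]
    (K B : ℕ) (hK : 0 < K) (hB : 0 < B) (hBK : B ∣ K)
    (p : ℕ → X → ℝ) (μ : X → ℝ)
    (hp_nonneg : ∀ k ∈ Finset.Icc 1 K, ∀ x, 0 ≤ p k x)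
    (hp_summable : ∀ k ∈ Finset.Icc 1 K, Summable (p k))
    (hp_sum : ∀ k ∈ Finset.Icc 1 K, ∑' x, p k x = 1)
    (hμ_nonneg : ∀ x, 0 ≤ μ x)
    (hμ_summable : Summable μ)
    (hμ_sum : ∑' x, μ x = 1)
    (C : ℝ) (hC : 0 < C)
    (hcov : ∀ k ∈ Finset.Icc 1 K, ∀ x, p k x ≤ C * μ x)
    (f : ℕ → X → ℝ)
    (hf : ∀ k ∈ Finset.Icc 1 K, ∀ x, f k x ∈ Set.Icc (0 : ℝ) 1)
    (lam : ℝ) (hlam : 1 ≤ lam) :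
    ∑ k ∈ Finset.Icc 1 K, ∑' x, p k x * f k x ≤
      C * B * Real.logb 2 (1 + C * K / lam) +
        Real.sqrt (4 * C * Real.log (1 + C * K / lam) *
          (2 * K * lam +
            ∑ k ∈ Finset.Icc 1 K, ∑ t ∈ Finset.Ico 1 (batchStart B k),
              ∑' x, p t x * (f k x) ^ 2)) := by
  obtain ⟨M, hKM⟩ := hBK
  have hM : 0 < M := by
    rcases Nat.eq_zero_or_pos M with h | h
    · subst h; omega
    · exact h
  have hKM' : K = M * B := by rw [hKM, Nat.mul_comm]
  have hcast : (M:ℝ)*B = (K:ℝ) := by rw [hKM']; push_cast; ring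
  have hlampos : (0:ℝ) < lam := by linarith
  have hKpos : (0:ℝ) < K := by exact_mod_cast hK
  -- membership helper
  have hbsle : ∀ k, 1 ≤ k → batchStart B k ≤ k := by
    intro k hk
    have : B * ((k-1)/B) ≤ k - 1 := by
      rw [Nat.mul_comm]; exact Nat.div_mul_le_self (k-1) B
    simp only [batchStart]; omega
  have htmem : ∀ k ∈ Finset.Icc 1 K, ∀ t ∈ Finset.Ico 1 (batchStart B k),
      t ∈ Finset.Icc 1 K := by
    intro k hk t ht
    rw [Finset.mem_Icc] at hk ⊢
    rw [Finset.mem_Ico] at ht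
    have := hbsle k hk.1
    omega
  -- summability facts
  have hf2 : ∀ k ∈ Finset.Icc 1 K, ∀ x, 0 ≤ (f k x)^2 ∧ (f k x)^2 ≤ 1 := by
    intro k hk x
    obtain ⟨h0, h1⟩ := hf k hk x
    exact ⟨sq_nonneg _, by nlinarith⟩
  have hpf : ∀ k ∈ Finset.Icc 1 K, Summable (fun x => p k x * f k x) := by
    intro k hk
    apply Summable.of_nonneg_of_le
      (fun x => mul_nonneg (hp_nonneg k hk x) (hf k hk x).1)
      (fun x => mul_le_of_le_one_right (hp_nonneg k hk x) (hf k hk x).2)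
      (hp_summable k hk)
  have hpf2 : ∀ k ∈ Finset.Icc 1 K, ∀ t ∈ Finset.Icc 1 K,
      Summable (fun x => p t x * (f k x)^2) := by
    intro k hk t ht
    apply Summable.of_nonneg_of_le
      (fun x => mul_nonneg (hp_nonneg t ht x) (hf2 k hk x).1)
      (fun x => mul_le_of_le_one_right (hp_nonneg t ht x) (hf2 k hk x).2)
      (hp_summable t ht)
  have hμf2 : ∀ k ∈ Finset.Icc 1 K, Summable (fun x => μ x * (f k x)^2) := by
    intro k hk
    apply Summable.of_nonneg_of_le
      (fun x => mul_nonneg (hμ_nonneg x) (hf2 k hk x).1)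
      (fun x => mul_le_of_le_one_right (hμ_nonneg x) (hf2 k hk x).2)
      hμ_summable
  set S : ℝ := ∑ k ∈ Finset.Icc 1 K, ∑ t ∈ Finset.Ico 1 (batchStart B k),
      ∑' x, p t x * (f k x) ^ 2 with hSdef
  have hSnonneg : 0 ≤ S := by
    apply Finset.sum_nonneg
    intro k hk
    apply Finset.sum_nonneg
    intro t ht
    exact tsum_nonneg (fun x => mul_nonneg (hp_nonneg t (htmem k hk t ht) x) (hf2 k hk x).1)
  set L : ℝ := Real.log (1 + C * K / lam) with hLdef
  have hL : 0 < L := Real.log_pos (by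
    have : 0 < C * K / lam := by positivity
    linarith)
  set T₀ : ℝ := 2 * K * lam + S with hT₀def
  have hT₀ : 0 < T₀ := by
    have : (1:ℝ) ≤ K := by exact_mod_cast hK
    nlinarith
  set R : ℝ := Real.sqrt (4 * C * L * T₀) with hRdef
  have hRsq : R^2 = 4 * C * L * T₀ := Real.sq_sqrt (by positivity)
  have hRpos : 0 < R := Real.sqrt_pos.2 (by positivity)
  set ε : ℝ := R / T₀ with hεdef
  have hε : 0 < ε := by positivity
  -- pointwise inequality from perx
  have key : ∀ x, ∑ k ∈ Finset.Icc 1 K, p k x * f k x ≤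
      C*B*Real.logb 2 (1+C*K/lam) * μ x + C*L/(2*ε*Real.log 2) * μ x
      + (ε/2) * ∑ k ∈ Finset.Icc 1 K,
          ((∑ t ∈ Finset.Ico 1 (batchStart B k), p t x) + lam * μ x) * (f k x)^2 := by
    intro x
    have hx := perx M B hB C lam (μ x) ε hC hlam (hμ_nonneg x) hε
      (fun t => p t x) (fun k => f k x)
      (fun k hk => hp_nonneg k (by rwa [← hKM'] at hk) x)
      (fun k hk => hcov k (by rwa [← hKM'] at hk) x)
      (fun k hk => (hf k (by rwa [← hKM'] at hk) x).1)
      (fun k hk => (hf k (by rwa [← hKM'] at hk) x).2)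
    rw [← hKM'] at hx
    rw [hcast] at hx
    exact hx
  -- definitions of per-x quantities
  have hGsummable : Summable (fun x => ∑ k ∈ Finset.Icc 1 K, p k x * f k x) :=
    summable_sum (fun k hk => hpf k hk)
  have hWksummable : ∀ k ∈ Finset.Icc 1 K,
      Summable (fun x => ((∑ t ∈ Finset.Ico 1 (batchStart B k), p t x) + lam * μ x) * (f k x)^2) := by
    intro k hk
    have : (fun x => ((∑ t ∈ Finset.Ico 1 (batchStart B k), p t x) + lam * μ x) * (f k x)^2)
        = fun x => (∑ t ∈ Finset.Ico 1 (batchStart B k), p t x * (f k x)^2)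
          + lam * (μ x * (f k x)^2) := by
      funext x
      rw [add_mul, Finset.sum_mul]
      ring
    rw [this]
    exact Summable.add (summable_sum (fun t ht => hpf2 k hk t (htmem k hk t ht)))
      ((hμf2 k hk).mul_left lam)
  have hHsummable : Summable (fun x =>
      C*B*Real.logb 2 (1+C*K/lam) * μ x + C*L/(2*ε*Real.log 2) * μ x
      + (ε/2) * ∑ k ∈ Finset.Icc 1 K,
          ((∑ t ∈ Finset.Ico 1 (batchStart B k), p t x) + lam * μ x) * (f k x)^2) :=
    Summable.add (Summable.add (hμ_summable.mul_left _) (hμ_summable.mul_left _))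
      ((summable_sum (fun k hk => hWksummable k hk)).mul_left _)
  -- the tsum of W
  have hWk_tsum : ∀ k ∈ Finset.Icc 1 K,
      (∑' x, ((∑ t ∈ Finset.Ico 1 (batchStart B k), p t x) + lam * μ x) * (f k x)^2)
      ≤ (∑ t ∈ Finset.Ico 1 (batchStart B k), ∑' x, p t x * (f k x)^2) + lam := by
    intro k hk
    have he : (fun x => ((∑ t ∈ Finset.Ico 1 (batchStart B k), p t x) + lam * μ x) * (f k x)^2)
        = fun x => (∑ t ∈ Finset.Ico 1 (batchStart B k), p t x * (f k x)^2)
          + lam * (μ x * (f k x)^2) := by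
      funext x
      rw [add_mul, Finset.sum_mul]
      ring
    rw [he, Summable.tsum_add (summable_sum (fun t ht => hpf2 k hk t (htmem k hk t ht)))
      ((hμf2 k hk).mul_left lam), Summable.tsum_finsetSum (fun t ht => hpf2 k hk t (htmem k hk t ht)),
      tsum_mul_left]
    have hμb : ∑' x, μ x * (f k x)^2 ≤ 1 := by
      rw [← hμ_sum]
      exact Summable.tsum_le_tsum
        (fun x => mul_le_of_le_one_right (hμ_nonneg x) (hf2 k hk x).2)
        (hμf2 k hk) hμ_summable
    have : lam * (∑' x, μ x * (f k x)^2) ≤ lam * 1 :=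
      mul_le_mul_of_nonneg_left hμb (le_of_lt hlampos)
    linarith
  -- combine
  have hmain : ∑ k ∈ Finset.Icc 1 K, ∑' x, p k x * f k x ≤
      C*B*Real.logb 2 (1+C*K/lam) + C*L/(2*ε*Real.log 2) + (ε/2) * (S + K * lam) := by
    rw [← Summable.tsum_finsetSum (fun k hk => hpf k hk)]
    have h1 : ∑' x, ∑ k ∈ Finset.Icc 1 K, p k x * f k x ≤
        ∑' x, (C*B*Real.logb 2 (1+C*K/lam) * μ x + C*L/(2*ε*Real.log 2) * μ x
        + (ε/2) * ∑ k ∈ Finset.Icc 1 K,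
            ((∑ t ∈ Finset.Ico 1 (batchStart B k), p t x) + lam * μ x) * (f k x)^2) :=
      Summable.tsum_le_tsum key hGsummable hHsummable
    have h2 : ∑' x, (C*B*Real.logb 2 (1+C*K/lam) * μ x + C*L/(2*ε*Real.log 2) * μ x
        + (ε/2) * ∑ k ∈ Finset.Icc 1 K,
            ((∑ t ∈ Finset.Ico 1 (batchStart B k), p t x) + lam * μ x) * (f k x)^2)
        = C*B*Real.logb 2 (1+C*K/lam) * (∑' x, μ x) + C*L/(2*ε*Real.log 2) * (∑' x, μ x)
        + (ε/2) * ∑' x, ∑ k ∈ Finset.Icc 1 K,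
            ((∑ t ∈ Finset.Ico 1 (batchStart B k), p t x) + lam * μ x) * (f k x)^2 := by
      rw [Summable.tsum_add (Summable.add (hμ_summable.mul_left _) (hμ_summable.mul_left _))
        ((summable_sum (fun k hk => hWksummable k hk)).mul_left _),
        Summable.tsum_add (hμ_summable.mul_left _) (hμ_summable.mul_left _),
        tsum_mul_left, tsum_mul_left, tsum_mul_left]
    have h3 : ∑' x, ∑ k ∈ Finset.Icc 1 K,
        ((∑ t ∈ Finset.Ico 1 (batchStart B k), p t x) + lam * μ x) * (f k x)^2
        ≤ S + K * lam := by
      rw [Summable.tsum_finsetSum (fun k hk => hWksummable k hk)]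
      calc ∑ k ∈ Finset.Icc 1 K, ∑' x,
            ((∑ t ∈ Finset.Ico 1 (batchStart B k), p t x) + lam * μ x) * (f k x)^2
          ≤ ∑ k ∈ Finset.Icc 1 K,
            ((∑ t ∈ Finset.Ico 1 (batchStart B k), ∑' x, p t x * (f k x)^2) + lam) :=
            Finset.sum_le_sum (fun k hk => hWk_tsum k hk)
        _ = S + K * lam := by
            rw [Finset.sum_add_distrib, Finset.sum_const, Nat.card_Icc, nsmul_eq_mul, hSdef]
            norm_num
    rw [hμ_sum] at h2
    have hε2 : (0:ℝ) ≤ ε/2 := by positivity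
    calc ∑' x, ∑ k ∈ Finset.Icc 1 K, p k x * f k x ≤ _ := h1
      _ = _ := h2
      _ ≤ C*B*Real.logb 2 (1+C*K/lam) * 1 + C*L/(2*ε*Real.log 2) * 1
            + (ε/2) * (S + K * lam) := by
          have := mul_le_mul_of_nonneg_left h3 hε2
          linarith
      _ = _ := by ring
  -- final numeric step
  have hfin : C*L/(2*ε*Real.log 2) + (ε/2) * (S + K * lam) ≤ R := by
    have hlog2 : (0.6931471803:ℝ) < Real.log 2 := Real.log_two_gt_d9
    have hlog2' : (0:ℝ) < Real.log 2 := by linarith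
    have hSK : S + K * lam ≤ T₀ := by
      have : (K:ℝ) * lam ≤ 2 * K * lam := by nlinarith
      rw [hT₀def]; linarith
    have hc2 : C*L/(2*ε*Real.log 2) = C*L*T₀/(2*R*Real.log 2) := by
      rw [hεdef]; field_simp
    have hR2 : (ε/2) * (S + K * lam) ≤ R/2 := by
      have : (ε/2) * (S + K*lam) ≤ (ε/2) * T₀ := by
        apply mul_le_mul_of_nonneg_left hSK (by positivity)
      have he : (ε/2) * T₀ = R/2 := by
        rw [hεdef]; field_simp
      linarith
    have hR1 : C*L*T₀/(2*R*Real.log 2) ≤ R/2 := by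
      rw [div_le_div_iff₀ (by positivity) (by norm_num)]
      nlinarith [hRsq, mul_pos (mul_pos hC hL) hT₀]
    rw [hc2]
    linarith
  have hRfinal : R = Real.sqrt (4 * C * Real.log (1 + C * K / lam) *
      (2 * K * lam + S)) := by rw [hRdef, hLdef, hT₀def]
  calc ∑ k ∈ Finset.Icc 1 K, ∑' x, p k x * f k x ≤ _ := hmain
    _ ≤ C*B*Real.logb 2 (1+C*K/lam) + R := by linarith
    _ = _ := by rw [hRfinal]
end
end

section
/- Let K and B be positive integers with B dividing K and M := K/B, and for m ∈ {1,…,M} let t_m := (m−1)·B + 1 and t_{M+1} := K+1. Let X be a countable set, let p_1,…,p_K and μ be probability mass functions on X, let C > 0 satisfy p_k(x) ≤ C·μ(x) for all k and x, let λ > 0, and let f^(1),…,f^(K) : X → [0,1]. For x ∈ X with μ(x) > 0, define P_m(x) := λ·μ(x) + ∑_{t=1}^{m·B} p_t(x) and B_x := {m ∈ {1,…,M} : P_m(x) ≥ 2·P_{m−1}(x)}. Then ∑_{x∈X, μ(x)>0} ∑_{m∈B_x} ∑_{k=t_m}^{t_{m+1}−1} p_k(x)·f^(k)(x) ≤ C·B·log₂(1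 + C·K/λ). -/
open scoped BigOperators

noncomputable section

/-- `P_m(x) := λ·μ(x) + ∑_{t=1}^{m·B} p_t(x)`. -/
def Pseq {X : Type*} (lam : ℝ) (μ : X → ℝ) (p : ℕ → X → ℝ) (B m : ℕ) (x : X) : ℝ :=
  lam * μ x + ∑ t ∈ Finset.Icc 1 (m * B), p t x

/-- The bad-batch set `B_x := {m ∈ {1,…,M} : P_m(x) ≥ 2·P_{m-1}(x)}`. -/
def badBatches {X : Type*} (lam : ℝ) (μ : X → ℝ) (p : ℕ → X → ℝ) (B M : ℕ) (x : X) :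
    Finset ℕ :=
  (Finset.Icc 1 M).filter fun m => 2 * Pseq lam μ p B (m - 1) x ≤ Pseq lam μ p B m x

/-- Bound on the bad-batch term `T_bad` in the proof of Lemma C.1 of the paper.
The `m`-th batch consists of episodes `t_m, …, t_{m+1} - 1` where
`t_m = (m-1)·B + 1`, i.e. episodes `(m-1)·B + 1, …, m·B`. -/
theorem bad_batch_term_bound
    {X : Type*} [Countable X]
    (K B : ℕ) (hK : 0 < K) (hB : 0 < B) (hBK : B ∣ K)
    (p : ℕ → X → ℝ) (μ : X → ℝ)
    (hp_nonneg : ∀ k ∈ Finset.Icc 1 K, ∀ x, 0 ≤ p k x)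
    (hp_summable : ∀ k ∈ Finset.Icc 1 K, Summable (p k))
    (hp_sum : ∀ k ∈ Finset.Icc 1 K, ∑' x, p k x = 1)
    (hμ_nonneg : ∀ x, 0 ≤ μ x)
    (hμ_summable : Summable μ)
    (hμ_sum : ∑' x, μ x = 1)
    (C : ℝ) (hC : 0 < C)
    (hcov : ∀ k ∈ Finset.Icc 1 K, ∀ x, p k x ≤ C * μ x)
    (lam : ℝ) (hlam : 0 < lam)
    (f : ℕ → X → ℝ)
    (hf : ∀ k ∈ Finset.Icc 1 K, ∀ x, f k x ∈ Set.Icc (0 : ℝ) 1) :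
    ∑' x : {x : X // 0 < μ x},
        ∑ m ∈ badBatches lam μ p B (K / B) (x : X),
          ∑ k ∈ Finset.Icc ((m - 1) * B + 1) (m * B), p k (x : X) * f k (x : X) ≤
      C * B * Real.logb 2 (1 + C * K / lam) := by
  set M := K / B with hM
  have hMB : M * B = K := Nat.div_mul_cancel hBK
  set L : ℝ := Real.logb 2 (1 + C * K / lam) with hL
  have hCK : (0:ℝ) ≤ C * K / lam := by positivity
  have hLnonneg : 0 ≤ L := Real.logb_nonneg (by norm_num) (by linarith)
  -- membership of batch episodes in Icc 1 K
  have hkmem : ∀ m ∈ Finset.Icc 1 M, ∀ k ∈ Finset.Icc ((m - 1) * B + 1) (m * B),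
      k ∈ Finset.Icc 1 K := by
    intro m hm k hk
    rw [Finset.mem_Icc] at hm hk ⊢
    constructor
    · omega
    · calc k ≤ m * B := hk.2
        _ ≤ M * B := Nat.mul_le_mul_right _ hm.2
        _ = K := hMB
  -- pointwise bound
  have key : ∀ x : X, 0 < μ x →
      ∑ m ∈ badBatches lam μ p B M x,
        ∑ k ∈ Finset.Icc ((m - 1) * B + 1) (m * B), p k x * f k x ≤
      (C * B * L) * μ x := by
    intro x hx
    set S := badBatches lam μ p B M x with hS
    have hSsub : S ⊆ Finset.Icc 1 M := Finset.filter_subset _ _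
    have hP0 : Pseq lam μ p B 0 x = lam * μ x := by simp [Pseq]
    have hPmono : ∀ a b : ℕ, a ≤ b → b ≤ M →
        Pseq lam μ p B a x ≤ Pseq lam μ p B b x := by
      intro a b hab hbM
      unfold Pseq
      apply add_le_add le_rfl
      apply Finset.sum_le_sum_of_subset_of_nonneg
      · exact Finset.Icc_subset_Icc_right (Nat.mul_le_mul_right _ hab)
      · intro t ht _
        rw [Finset.mem_Icc] at ht
        refine hp_nonneg t ?_ x
        rw [Finset.mem_Icc]
        refine ⟨ht.1, le_trans ht.2 ?_⟩
        calc b * B ≤ M * B := Nat.mul_le_mul_right _ hbM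
          _ = K := hMB
    have hPpos : ∀ n, n ≤ M → 0 < Pseq lam μ p B n x := by
      intro n hn
      have := hPmono 0 n (Nat.zero_le _) hn
      rw [hP0] at this
      have : 0 < lam * μ x := by positivity
      linarith [hPmono 0 n (Nat.zero_le _) hn, hP0 ▸ this]
    -- induction: growth of P along bad batches
    have hind : ∀ n, n ≤ M →
        lam * μ x * 2 ^ ((S.filter (· ≤ n)).card) ≤ Pseq lam μ p B n x := by
      intro n
      induction n with
      | zero =>
        intro _
        have he : S.filter (· ≤ 0) = ∅ := by
          apply Finset.filter_eq_empty_iff.mpr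
          intro m hm
          have := (Finset.mem_Icc.mp (hSsub hm)).1
          omega
        rw [he, hP0]
        simp
      | succ n ih =>
        intro hn1
        have hn : n ≤ M := Nat.le_of_succ_le hn1
        have ihn := ih hn
        by_cases hmem : n + 1 ∈ S
        · have hfilt : S.filter (· ≤ n + 1) = insert (n + 1) (S.filter (· ≤ n)) := by
            ext m
            simp only [Finset.mem_filter, Finset.mem_insert]
            constructor
            · rintro ⟨hmS, hle⟩
              rcases Nat.lt_or_ge m (n + 1) with h | h
              · exact Or.inr ⟨hmS, by omega⟩
              · exact Or.inl (by omega)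
            · rintro (rfl | ⟨hmS, hle⟩)
              · exact ⟨hmem, le_refl _⟩
              · exact ⟨hmS, by omega⟩
          have hnot : (n + 1) ∉ S.filter (· ≤ n) := by
            simp only [Finset.mem_filter]
            omega
          rw [hfilt, Finset.card_insert_of_notMem hnot]
          have hbad : 2 * Pseq lam μ p B n x ≤ Pseq lam μ p B (n + 1) x := by
            have := (Finset.mem_filter.mp hmem).2
            simpa using this
          calc lam * μ x * 2 ^ ((S.filter (· ≤ n)).card + 1)
              = 2 * (lam * μ x * 2 ^ ((S.filter (· ≤ n)).card)) := by ring
            _ ≤ 2 * Pseq lam μ p B n x := by linarith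
            _ ≤ Pseq lam μ p B (n + 1) x := hbad
        · have hfilt : S.filter (· ≤ n + 1) = S.filter (· ≤ n) := by
            ext m
            simp only [Finset.mem_filter]
            constructor
            · rintro ⟨hmS, hle⟩
              refine ⟨hmS, ?_⟩
              rcases Nat.lt_or_ge m (n + 1) with h | h
              · omega
              · exfalso
                have hmn : m = n + 1 := by omega
                exact hmem (hmn ▸ hmS)
            · rintro ⟨hmS, hle⟩
              exact ⟨hmS, by omega⟩
          rw [hfilt]
          exact le_trans ihn (hPmono n (n + 1) (Nat.le_succ _) hn1)
    -- bound P_M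
    have hPM : Pseq lam μ p B M x ≤ lam * μ x + C * K * μ x := by
      unfold Pseq
      have hsum : ∑ t ∈ Finset.Icc 1 (M * B), p t x ≤
          ∑ t ∈ Finset.Icc 1 (M * B), C * μ x := by
        apply Finset.sum_le_sum
        intro t ht
        exact hcov t (hMB ▸ ht) x
      rw [Finset.sum_const, Nat.card_Icc] at hsum
      have hcard : M * B + 1 - 1 = K := by omega
      rw [hcard] at hsum
      have : (K : ℝ) * (C * μ x) = C * K * μ x := by ring
      rw [nsmul_eq_mul, this] at hsum
      linarith
    -- filter at M is all of S
    have hfiltM : S.filter (· ≤ M) = S := by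
      apply Finset.filter_true_of_mem
      intro m hm
      exact (Finset.mem_Icc.mp (hSsub hm)).2
    have hcardbound : (2:ℝ) ^ S.card ≤ 1 + C * K / lam := by
      have h1 := hind M (le_refl _)
      rw [hfiltM] at h1
      have h2 : lam * μ x * 2 ^ S.card ≤ lam * μ x + C * K * μ x := le_trans h1 hPM
      have h3 : lam * μ x + C * K * μ x = (1 + C * K / lam) * (lam * μ x) := by
        field_simp
      rw [h3] at h2
      have h4 : 0 < lam * μ x := by positivity
      rw [mul_comm] at h2
      exact le_of_mul_le_mul_right h2 h4
    have hcardL : (S.card : ℝ) ≤ L := by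
      have h2pos : (0:ℝ) < 2 ^ S.card := by positivity
      have hlog := Real.logb_le_logb_of_le (b := 2) (by norm_num) h2pos hcardbound
      rwa [Real.logb_pow, Real.logb_self_eq_one (by norm_num), mul_one] at hlog
    -- inner sum bound per batch
    have hinner : ∀ m ∈ S,
        ∑ k ∈ Finset.Icc ((m - 1) * B + 1) (m * B), p k x * f k x ≤ B * (C * μ x) := by
      intro m hm
      have hmIcc := hSsub hm
      have hcard : (Finset.Icc ((m - 1) * B + 1) (m * B)).card = B := by
        rw [Nat.card_Icc]
        have hm1 : 1 ≤ m := (Finset.mem_Icc.mp hmIcc).1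
        have : m * B = (m - 1) * B + B := by
          have : m = (m - 1) + 1 := by omega
          calc m * B = ((m - 1) + 1) * B := by rw [← this]
            _ = (m - 1) * B + B := by ring
        omega
      calc ∑ k ∈ Finset.Icc ((m - 1) * B + 1) (m * B), p k x * f k x
          ≤ ∑ k ∈ Finset.Icc ((m - 1) * B + 1) (m * B), C * μ x := by
            apply Finset.sum_le_sum
            intro k hk
            have hkK := hkmem m hmIcc k hk
            have hfk := hf k hkK x
            have hpk := hp_nonneg k hkK x
            have hcv := hcov k hkK x
            calc p k x * f k x ≤ p k x * 1 := by
                  apply mul_le_mul_of_nonneg_left hfk.2 hpk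
              _ = p k x := mul_one _
              _ ≤ C * μ x := hcv
        _ = B * (C * μ x) := by
            rw [Finset.sum_const, hcard, nsmul_eq_mul]
    calc ∑ m ∈ S, ∑ k ∈ Finset.Icc ((m - 1) * B + 1) (m * B), p k x * f k x
        ≤ ∑ m ∈ S, (B : ℝ) * (C * μ x) := Finset.sum_le_sum hinner
      _ = S.card * ((B : ℝ) * (C * μ x)) := by rw [Finset.sum_const, nsmul_eq_mul]
      _ ≤ L * ((B : ℝ) * (C * μ x)) := by
          apply mul_le_mul_of_nonneg_right hcardL
          positivity
      _ = (C * B * L) * μ x := by ring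
  -- nonnegativity of the summand
  have hgnn : ∀ x : {x : X // 0 < μ x},
      0 ≤ ∑ m ∈ badBatches lam μ p B M (x : X),
          ∑ k ∈ Finset.Icc ((m - 1) * B + 1) (m * B), p k (x : X) * f k (x : X) := by
    intro x
    apply Finset.sum_nonneg
    intro m hm
    have hmIcc : m ∈ Finset.Icc 1 M := Finset.filter_subset _ _ hm
    apply Finset.sum_nonneg
    intro k hk
    have hkK := hkmem m hmIcc k hk
    exact mul_nonneg (hp_nonneg k hkK _) (hf k hkK _).1
  have hdom : ∀ x : {x : X // 0 < μ x},
      ∑ m ∈ badBatches lam μ p B M (x : X),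
          ∑ k ∈ Finset.Icc ((m - 1) * B + 1) (m * B), p k (x : X) * f k (x : X) ≤
        (C * B * L) * μ (x : X) := fun x => key x x.2
  have hh : Summable (fun x : {x : X // 0 < μ x} => (C * B * L) * μ (x : X)) :=
    (hμ_summable.subtype _).mul_left _
  have hg : Summable (fun x : {x : X // 0 < μ x} =>
      ∑ m ∈ badBatches lam μ p B M (x : X),
        ∑ k ∈ Finset.Icc ((m - 1) * B + 1) (m * B), p k (x : X) * f k (x : X)) :=
    Summable.of_nonneg_of_le hgnn hdom hh
  have hμsub : ∑' x : {x : X // 0 < μ x}, μ (x : X) ≤ 1 := by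
    rw [← hμ_sum]
    rw [show (∑' x : {x : X // 0 < μ x}, μ (x : X))
        = ∑' x : {x : X | 0 < μ x}, μ (x : X) from rfl,
      tsum_subtype {x : X | 0 < μ x} μ]
    apply Summable.tsum_le_tsum _ (hμ_summable.indicator _) hμ_summable
    intro x
    by_cases hx : x ∈ {x : X | 0 < μ x}
    · rw [Set.indicator_of_mem hx]
    · rw [Set.indicator_of_notMem hx]
      exact hμ_nonneg x
  calc ∑' x : {x : X // 0 < μ x},
        ∑ m ∈ badBatches lam μ p B M (x : X),
          ∑ k ∈ Finset.Icc ((m - 1) * B + 1) (m * B), p k (x : X) * f k (x : X)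
      ≤ ∑' x : {x : X // 0 < μ x}, (C * B * L) * μ (x : X) := Summable.tsum_le_tsum hdom hg hh
    _ = (C * B * L) * ∑' x : {x : X // 0 < μ x}, μ (x : X) := tsum_mul_left
    _ ≤ (C * B * L) * 1 := by
        apply mul_le_mul_of_nonneg_left hμsub
        positivity
    _ = C * B * L := mul_one _
end
end

section
/- Let K be a positive integer, let X be a countable set, let p_1,…,p_K and μ be probability mass functions on X, let C > 0 satisfy p_k(x) ≤ C·μ(x) for all k and x, and let λ > 0. Define p̂_k(x) := λ·μ(x) + ∑_{t=1}^{k} p_t(x). Then ∑_{k=1}^K ∑_{x∈X, μ(x)>0} p_k(x)² / p̂_k(x) ≤ 2·C·log(1 + C·K/λ). -/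
open scoped BigOperators

noncomputable section

/-- `p̂_k(x) := λ·μ(x) + ∑_{t=1}^{k} p_t(x)`. -/
def pHat {X : Type*} (lam : ℝ) (μ : X → ℝ) (p : ℕ → X → ℝ) (k : ℕ) (x : X) : ℝ :=
  lam * μ x + ∑ t ∈ Finset.Icc 1 k, p t x

private lemma log_ratio_key (a u : ℝ) (ha : 0 < a) (hu : 0 ≤ u) :
    u / (a + u) ≤ Real.log (a + u) - Real.log a := by
  have hau : 0 < a + u := by linarith
  have h := Real.log_le_sub_one_of_pos (show (0:ℝ) < a / (a + u) from div_pos ha hau)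
  rw [Real.log_div ha.ne' hau.ne'] at h
  have h2 : a / (a + u) - 1 = -(u / (a + u)) := by field_simp; ring
  rw [h2] at h
  linarith

/-- Coverability potential bound (the bound on `T₁`) from the proof of
Lemma C.1 of the paper. -/
theorem coverability_potential_bound
    {X : Type*} [Countable X]
    (K : ℕ) (hK : 0 < K)
    (p : ℕ → X → ℝ) (μ : X → ℝ)
    (hp_nonneg : ∀ k ∈ Finset.Icc 1 K, ∀ x, 0 ≤ p k x)
    (hp_summable : ∀ k ∈ Finset.Icc 1 K, Summable (p k))
    (hp_sum : ∀ k ∈ Finset.Icc 1 K, ∑' x, p k x = 1)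
    (hμ_nonneg : ∀ x, 0 ≤ μ x)
    (hμ_summable : Summable μ)
    (hμ_sum : ∑' x, μ x = 1)
    (C : ℝ) (hC : 0 < C)
    (hcov : ∀ k ∈ Finset.Icc 1 K, ∀ x, p k x ≤ C * μ x)
    (lam : ℝ) (hlam : 0 < lam) :
    ∑ k ∈ Finset.Icc 1 K,
        ∑' x : {x : X // 0 < μ x}, (p k (x : X)) ^ 2 / pHat lam μ p k (x : X) ≤
      2 * C * Real.log (1 + C * K / lam) := by
  set L := Real.log (1 + C * K / lam) with hLdef
  have hCK : (0:ℝ) ≤ C * K / lam := by positivity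
  have hL0 : 0 ≤ L := Real.log_nonneg (by linarith)
  -- lower bound and positivity of pHat on the support of μ, for indices ≤ K
  have hlow : ∀ k, k ≤ K → ∀ x : X, lam * μ x ≤ pHat lam μ p k x := by
    intro k hk x
    have hsum : 0 ≤ ∑ t ∈ Finset.Icc 1 k, p t x := by
      apply Finset.sum_nonneg
      intro t ht
      exact hp_nonneg t (Finset.mem_Icc.mpr ⟨(Finset.mem_Icc.mp ht).1,
        le_trans (Finset.mem_Icc.mp ht).2 hk⟩) x
    unfold pHat; linarith
  have hpHat_pos : ∀ k, k ≤ K → ∀ x : X, 0 < μ x → 0 < pHat lam μ p k x := by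
    intro k hk x hx
    exact lt_of_lt_of_le (mul_pos hlam hx) (hlow k hk x)
  -- pHat step relation for k ≥ 1
  have hstep : ∀ k, 1 ≤ k → ∀ x : X,
      pHat lam μ p k x = pHat lam μ p (k - 1) x + p k x := by
    intro k hk x
    obtain ⟨m, rfl⟩ := Nat.exists_eq_add_of_le hk
    simp only [pHat, Nat.add_sub_cancel_left]
    rw [show 1 + m = m + 1 by ring, Finset.sum_Icc_succ_top (Nat.le_add_left 1 m)]
    ring
  -- the log potential
  set F : ℕ → X → ℝ := fun k x => Real.log (pHat lam μ p k x) with hF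
  -- pointwise key bound
  have hkey : ∀ k ∈ Finset.Icc 1 K, ∀ x : X, 0 < μ x →
      (p k x) ^ 2 / pHat lam μ p k x ≤ C * μ x * (F k x - F (k - 1) x) := by
    intro k hk x hx
    obtain ⟨hk1, hkK⟩ := Finset.mem_Icc.mp hk
    have ha : 0 < pHat lam μ p (k - 1) x := hpHat_pos (k - 1) (le_trans (Nat.sub_le k 1) hkK) x hx
    have hu : 0 ≤ p k x := hp_nonneg k hk x
    have hsplit := hstep k hk1 x
    have hlog := log_ratio_key (pHat lam μ p (k - 1) x) (p k x) ha hu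
    have hpk : 0 < pHat lam μ p k x := hpHat_pos k hkK x hx
    have hratio : 0 ≤ p k x / pHat lam μ p k x := div_nonneg hu hpk.le
    have h3 : p k x / pHat lam μ p k x ≤ F k x - F (k - 1) x := by
      simp only [hF]
      rw [hsplit]
      exact hlog
    have hCμ : 0 ≤ C * μ x := by positivity
    calc (p k x) ^ 2 / pHat lam μ p k x = p k x * (p k x / pHat lam μ p k x) := by ring
      _ ≤ (C * μ x) * (p k x / pHat lam μ p k x) :=
          mul_le_mul_of_nonneg_right (hcov k hk x) hratio
      _ ≤ C * μ x * (F k x - F (k - 1) x) := mul_le_mul_of_nonneg_left h3 hCμ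
  -- the log-difference is nonnegative
  have hdiff_nonneg : ∀ k ∈ Finset.Icc 1 K, ∀ x : X, 0 < μ x →
      0 ≤ F k x - F (k - 1) x := by
    intro k hk x hx
    obtain ⟨hk1, hkK⟩ := Finset.mem_Icc.mp hk
    have ha : 0 < pHat lam μ p (k - 1) x := hpHat_pos (k - 1) (le_trans (Nat.sub_le k 1) hkK) x hx
    have hle : pHat lam μ p (k - 1) x ≤ pHat lam μ p k x := by
      rw [hstep k hk1 x]; linarith [hp_nonneg k hk x]
    exact sub_nonneg.mpr (Real.log_le_log ha hle)
  -- the log-difference is bounded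
  have hdiff_bdd : ∀ k ∈ Finset.Icc 1 K, ∀ x : X, 0 < μ x →
      F k x - F (k - 1) x ≤ Real.log (1 + C / lam) := by
    intro k hk x hx
    obtain ⟨hk1, hkK⟩ := Finset.mem_Icc.mp hk
    have ha : 0 < pHat lam μ p (k - 1) x := hpHat_pos (k - 1) (le_trans (Nat.sub_le k 1) hkK) x hx
    have hub : pHat lam μ p k x ≤ (1 + C / lam) * pHat lam μ p (k - 1) x := by
      have h1 : p k x ≤ C * μ x := hcov k hk x
      have h2 : lam * μ x ≤ pHat lam μ p (k - 1) x :=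
        hlow (k - 1) (le_trans (Nat.sub_le k 1) hkK) x
      have h3 : C * μ x = (C / lam) * (lam * μ x) := by field_simp
      have h4 : (C / lam) * (lam * μ x) ≤ (C / lam) * pHat lam μ p (k - 1) x :=
        mul_le_mul_of_nonneg_left h2 (by positivity)
      rw [hstep k hk1 x]; nlinarith
    have hlog := Real.log_le_log (hpHat_pos k hkK x hx) hub
    rw [Real.log_mul (by positivity) ha.ne'] at hlog
    have e1 : F k x = Real.log (pHat lam μ p k x) := rfl
    have e2 : F (k - 1) x = Real.log (pHat lam μ p (k - 1) x) := rfl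
    rw [e1, e2]
    linarith
  -- telescoping sum bound
  have htele : ∀ x : X, 0 < μ x →
      ∑ k ∈ Finset.Icc 1 K, (F k x - F (k - 1) x) ≤ L := by
    intro x hx
    have h1 : ∑ k ∈ Finset.Icc 1 K, (F k x - F (k - 1) x)
        = ∑ i ∈ Finset.range K, (F (i + 1) x - F i x) := by
      rw [← Finset.Ico_add_one_right_eq_Icc, Finset.sum_Ico_eq_sum_range]
      apply Finset.sum_congr (by norm_num)
      intro i _
      rw [Nat.add_comm 1 i]
      simp
    rw [h1, Finset.sum_range_sub (fun i => F i x)]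
    -- bound F K x - F 0 x
    have hF0 : F 0 x = Real.log (lam * μ x) := by
      simp [hF, pHat]
    have hFK : F K x ≤ Real.log (μ x * (lam + C * K)) := by
      apply Real.log_le_log (hpHat_pos K le_rfl x hx)
      have hsum : ∑ t ∈ Finset.Icc 1 K, p t x ≤ ∑ t ∈ Finset.Icc 1 K, C * μ x :=
        Finset.sum_le_sum (fun t ht => hcov t ht x)
      simp only [Finset.sum_const, Nat.card_Icc, Nat.add_sub_cancel, nsmul_eq_mul] at hsum
      unfold pHat
      nlinarith
    have heq : Real.log (μ x * (lam + C * K)) - Real.log (lam * μ x) = L := by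
      rw [Real.log_mul hx.ne' (by positivity), Real.log_mul hlam.ne' hx.ne', hLdef]
      have : (1 : ℝ) + C * K / lam = (lam + C * K) / lam := by field_simp
      rw [this, Real.log_div (by positivity) hlam.ne']
      ring
    linarith
  -- summability setup on the subtype
  have hμS : Summable (fun x : {x : X // 0 < μ x} => μ x) :=
    hμ_summable.subtype {x | 0 < μ x}
  set g' : ℕ → {x : X // 0 < μ x} → ℝ :=
    fun k x => C * μ (x : X) * (F k (x : X) - F (k - 1) (x : X)) with hg'
  have hg'_nonneg : ∀ k ∈ Finset.Icc 1 K, ∀ x : {x : X // 0 < μ x}, 0 ≤ g' k x := by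
    intro k hk x
    exact mul_nonneg (mul_nonneg hC.le (hμ_nonneg _)) (hdiff_nonneg k hk x x.2)
  have hg'_summable : ∀ k ∈ Finset.Icc 1 K, Summable (g' k) := by
    intro k hk
    refine Summable.of_nonneg_of_le (hg'_nonneg k hk) ?_
      (hμS.mul_left (C * Real.log (1 + C / lam)))
    intro x
    have hb := hdiff_bdd k hk x x.2
    have hCμ : 0 ≤ C * μ (x : X) := mul_nonneg hC.le (hμ_nonneg _)
    calc g' k x ≤ C * μ (x : X) * Real.log (1 + C / lam) :=
          mul_le_mul_of_nonneg_left hb hCμ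
      _ = (C * Real.log (1 + C / lam)) * μ (x : X) := by ring
  have hg_summable : ∀ k ∈ Finset.Icc 1 K,
      Summable (fun x : {x : X // 0 < μ x} => (p k (x : X)) ^ 2 / pHat lam μ p k (x : X)) := by
    intro k hk
    apply Summable.of_nonneg_of_le (g := fun x : {x : X // 0 < μ x} =>
      (p k (x : X)) ^ 2 / pHat lam μ p k (x : X)) _ _ (hg'_summable k hk)
    · intro x
      exact div_nonneg (sq_nonneg _) (hpHat_pos k (Finset.mem_Icc.mp hk).2 x x.2).le
    · intro x
      exact hkey k hk x x.2
  -- main chain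
  calc ∑ k ∈ Finset.Icc 1 K,
        ∑' x : {x : X // 0 < μ x}, (p k (x : X)) ^ 2 / pHat lam μ p k (x : X)
      ≤ ∑ k ∈ Finset.Icc 1 K, ∑' x : {x : X // 0 < μ x}, g' k x := by
        apply Finset.sum_le_sum
        intro k hk
        exact Summable.tsum_le_tsum (fun x => hkey k hk x x.2) (hg_summable k hk) (hg'_summable k hk)
    _ = ∑' x : {x : X // 0 < μ x}, ∑ k ∈ Finset.Icc 1 K, g' k x :=
        (Summable.tsum_finsetSum hg'_summable).symm
    _ ≤ ∑' x : {x : X // 0 < μ x}, (C * L) * μ (x : X) := by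
        apply Summable.tsum_le_tsum _ (summable_sum hg'_summable) (hμS.mul_left _)
        intro x
        have : ∑ k ∈ Finset.Icc 1 K, g' k x
            = C * μ (x : X) * ∑ k ∈ Finset.Icc 1 K, (F k (x : X) - F (k - 1) (x : X)) := by
          rw [Finset.mul_sum]
        rw [this]
        have hCμ : 0 ≤ C * μ (x : X) := mul_nonneg hC.le (hμ_nonneg _)
        calc C * μ (x : X) * ∑ k ∈ Finset.Icc 1 K, (F k (x : X) - F (k - 1) (x : X))
            ≤ C * μ (x : X) * L := mul_le_mul_of_nonneg_left (htele x x.2) hCμ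
          _ = (C * L) * μ (x : X) := by ring
    _ = (C * L) * ∑' x : {x : X // 0 < μ x}, μ (x : X) := tsum_mul_left
    _ ≤ (C * L) * 1 := by
        apply mul_le_mul_of_nonneg_left _ (by positivity)
        rw [← hμ_sum]
        exact Summable.tsum_subtype_le μ {x | 0 < μ x} hμ_nonneg hμ_summable
    _ ≤ 2 * C * L := by nlinarith
end
end

section
/- Let K and B be positive integers with B dividing K and M := K/B, and for k ∈ {1,…,K} let [k] := B·⌊(k−1)/B⌋ + 1; for m ∈ {1,…,M} let t_m := (m−1)·B + 1 and t_{M+1} := K+1. Let X be a countable set, let p_1,…,p_K and μ be probability mass functions on X, let C > 0 satisfy p_k(x) ≤ C·μ(x) for all k and x, let λ ≥ 1, and let f^(1),…,f^(K) : X → [0,1]. For x with μ(x) > 0 define P_m(x) := λ·μ(x) + ∑_{t=1}^{m·B} p_t(x) and B_x := {m ∈ {1,…,M} : P_m(x) ≥ 2·P_{m−1}(x)}. Then ∑_{x∈X, μ(x)>0} ∑_{m∈{1,…,M}\B_x} ∑_{k=t_m}^{t_{m+1}−1} p_k(x)·f^(k)(x) ≤ √( 4·C·log(1 + C·K/λ)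 · [ 2·K·λ + ∑_{k=1}^K ∑_{t<[k]} ∑_{x∈X} p_t(x)·f^(k)(x)² ] ). -/
open scoped BigOperators

noncomputable section

/-- Cauchy–Schwarz for finite sums, square-root form. -/
lemma sqrtCS {ι : Type*} (s : Finset ι) (a b : ι → ℝ)
    (ha : ∀ i ∈ s, 0 ≤ a i) (hb : ∀ i ∈ s, 0 ≤ b i) :
    ∑ i ∈ s, Real.sqrt (a i) * Real.sqrt (b i) ≤
      Real.sqrt (∑ i ∈ s, a i) * Real.sqrt (∑ i ∈ s, b i) := by
  have h := Finset.sum_mul_sq_le_sq_mul_sq s (fun i => Real.sqrt (a i)) (fun i => Real.sqrt (b i))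
  have e1 : ∑ i ∈ s, Real.sqrt (a i) ^ 2 = ∑ i ∈ s, a i :=
    Finset.sum_congr rfl fun i hi => Real.sq_sqrt (ha i hi)
  have e2 : ∑ i ∈ s, Real.sqrt (b i) ^ 2 = ∑ i ∈ s, b i :=
    Finset.sum_congr rfl fun i hi => Real.sq_sqrt (hb i hi)
  have hnn : 0 ≤ ∑ i ∈ s, Real.sqrt (a i) * Real.sqrt (b i) :=
    Finset.sum_nonneg fun i _ => mul_nonneg (Real.sqrt_nonneg _) (Real.sqrt_nonneg _)
  calc ∑ i ∈ s, Real.sqrt (a i) * Real.sqrt (b i)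
      = Real.sqrt ((∑ i ∈ s, Real.sqrt (a i) * Real.sqrt (b i)) ^ 2) := (Real.sqrt_sq hnn).symm
    _ ≤ Real.sqrt ((∑ i ∈ s, a i) * ∑ i ∈ s, b i) := by
        apply Real.sqrt_le_sqrt
        rw [← e1, ← e2]
        exact h
    _ = Real.sqrt (∑ i ∈ s, a i) * Real.sqrt (∑ i ∈ s, b i) :=
        Real.sqrt_mul (Finset.sum_nonneg ha) _

/-- AM–GM in square-root form. -/
lemma sqrt_mul_sqrt_le (a b : ℝ) (ha : 0 ≤ a) (hb : 0 ≤ b) :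
    Real.sqrt a * Real.sqrt b ≤ (1 / 2) * (a + b) := by
  nlinarith [Real.sq_sqrt ha, Real.sq_sqrt hb, sq_nonneg (Real.sqrt a - Real.sqrt b),
    Real.sqrt_nonneg a, Real.sqrt_nonneg b]

/-- Cauchy–Schwarz for infinite sums, square-root form. -/
lemma tsumCS {ι : Type*} (a b : ι → ℝ) (ha : ∀ i, 0 ≤ a i) (hb : ∀ i, 0 ≤ b i)
    (hsa : Summable a) (hsb : Summable b) :
    ∑' i, Real.sqrt (a i) * Real.sqrt (b i) ≤
      Real.sqrt (∑' i, a i) * Real.sqrt (∑' i, b i) := by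
  have hs : Summable fun i => Real.sqrt (a i) * Real.sqrt (b i) :=
    Summable.of_nonneg_of_le (fun i => mul_nonneg (Real.sqrt_nonneg _) (Real.sqrt_nonneg _))
      (fun i => sqrt_mul_sqrt_le _ _ (ha i) (hb i)) ((hsa.add hsb).mul_left (1 / 2))
  refine Summable.tsum_le_of_sum_le hs fun s => ?_
  calc ∑ i ∈ s, Real.sqrt (a i) * Real.sqrt (b i)
      ≤ Real.sqrt (∑ i ∈ s, a i) * Real.sqrt (∑ i ∈ s, b i) :=
        sqrtCS s a b (fun i _ => ha i) (fun i _ => hb i)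
    _ ≤ Real.sqrt (∑' i, a i) * Real.sqrt (∑' i, b i) :=
        mul_le_mul (Real.sqrt_le_sqrt (Summable.sum_le_tsum s (fun i _ => ha i) hsa))
          (Real.sqrt_le_sqrt (Summable.sum_le_tsum s (fun i _ => hb i) hsb))
          (Real.sqrt_nonneg _) (Real.sqrt_nonneg _)

/-- Restricting a nonnegative summable function to a subtype decreases the sum. -/
lemma tsum_subtype_le_tsum' {X : Type*} (f : X → ℝ) (hf : ∀ x, 0 ≤ f x)
    (h : Summable f) (s : Set X) : ∑' x : s, f x ≤ ∑' x, f x := by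
  rw [tsum_subtype s f]
  exact Summable.tsum_le_tsum (fun x => Set.indicator_le_self' (fun y _ => hf y) x) (h.indicator s) h

/-- The per-point (per `x`) core estimate. -/
lemma core (K B : ℕ) (hB : 0 < B) (hBK : B ∣ K) (q g : ℕ → ℝ) (u C lam : ℝ)
    (hu : 0 < u) (hC : 0 < C) (hlam : 0 < lam)
    (hq : ∀ k ∈ Finset.Icc 1 K, 0 ≤ q k)
    (hcov : ∀ k ∈ Finset.Icc 1 K, q k ≤ C * u)
    (hg0 : ∀ k ∈ Finset.Icc 1 K, 0 ≤ g k) (hg1 : ∀ k ∈ Finset.Icc 1 K, g k ≤ 1)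
    (P : ℕ → ℝ) (hP : ∀ m, P m = lam * u + ∑ t ∈ Finset.Icc 1 (m * B), q t)
    (Bad : Finset ℕ)
    (hBad : Bad = (Finset.Icc 1 (K / B)).filter fun m => 2 * P (m - 1) ≤ P m) :
    ∑ m ∈ Finset.Icc 1 (K / B) \ Bad,
        ∑ k ∈ Finset.Icc ((m - 1) * B + 1) (m * B), q k * g k ≤
      Real.sqrt (2 * C * Real.log (1 + C * K / lam) * u) *
        Real.sqrt (K * lam * u +
          ∑ k ∈ Finset.Icc 1 K, ∑ t ∈ Finset.Ico 1 (batchStart B k), q t * g k ^ 2) := by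
  classical
  have hMB : K / B * B = K := Nat.div_mul_cancel hBK
  set M := K / B with hMdef
  set batch : ℕ → Finset ℕ := fun m => Finset.Icc ((m - 1) * B + 1) (m * B) with hbatch
  have hsubK : ∀ m, m ≤ M → ∀ k ∈ batch m, k ∈ Finset.Icc 1 K := by
    intro m hm k hk
    simp only [hbatch, Finset.mem_Icc] at hk ⊢
    have h2 : m * B ≤ M * B := Nat.mul_le_mul_right B hm
    omega
  have hPpos : ∀ m, m ≤ M → 0 < P m := by
    intro m hm
    have hsum : 0 ≤ ∑ t ∈ Finset.Icc 1 (m * B), q t := by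
      apply Finset.sum_nonneg
      intro t ht
      apply hq
      simp only [Finset.mem_Icc] at ht ⊢
      have h2 : m * B ≤ M * B := Nat.mul_le_mul_right B hm
      omega
    have h3 : 0 < lam * u := mul_pos hlam hu
    rw [hP]; linarith
  have hdiff : ∀ m ∈ Finset.Icc 1 M, P m - P (m - 1) = ∑ k ∈ batch m, q k := by
    intro m hm
    simp only [Finset.mem_Icc] at hm
    have h1 : Finset.Icc 1 (m * B) = Finset.Ioc 0 (m * B) := by
      rw [← Finset.Icc_add_one_left_eq_Ioc, zero_add]
    have h2 : Finset.Icc 1 ((m - 1) * B) = Finset.Ioc 0 ((m - 1) * B) := by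
      rw [← Finset.Icc_add_one_left_eq_Ioc, zero_add]
    have h3 : batch m = Finset.Ioc ((m - 1) * B) (m * B) := by
      simp only [hbatch]; rw [← Finset.Icc_add_one_left_eq_Ioc]
    have hle : (m - 1) * B ≤ m * B := Nat.mul_le_mul_right B (by omega)
    have h4 := Finset.sum_Ioc_consecutive (fun t => q t) (Nat.zero_le ((m - 1) * B)) hle
    rw [hP, hP, h1, h2, h3]
    linarith [h4]
  have hPmono : ∀ m ∈ Finset.Icc 1 M, P (m - 1) ≤ P m := by
    intro m hm
    have h1 := hdiff m hm
    have h2 : 0 ≤ ∑ k ∈ batch m, q k := by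
      apply Finset.sum_nonneg
      intro k hk
      exact hq k (hsubK m (by simp only [Finset.mem_Icc] at hm; omega) k hk)
    linarith
  set G := Finset.Icc 1 M \ Bad with hG
  have hGgood : ∀ m ∈ G, (1 ≤ m ∧ m ≤ M) ∧ P m < 2 * P (m - 1) := by
    intro m hm
    rw [hG, hBad] at hm
    simp only [Finset.mem_sdiff, Finset.mem_filter, Finset.mem_Icc, not_and, not_le] at hm
    exact ⟨hm.1, hm.2 hm.1⟩
  have hGsub : G ⊆ Finset.Icc 1 M := Finset.sdiff_subset
  -- disjointness of batches
  have hkey : ∀ m n : ℕ, m < n → Disjoint (batch m) (batch n) := by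
    intro m n h
    apply Finset.disjoint_left.2
    intro k hk hk'
    simp only [hbatch, Finset.mem_Icc] at hk hk'
    have : m * B ≤ (n - 1) * B := Nat.mul_le_mul_right B (by omega)
    omega
  have hdisj : (↑G : Set ℕ).PairwiseDisjoint batch := by
    intro m _ n _ hmn
    rcases lt_or_gt_of_ne hmn with h | h
    · exact hkey m n h
    · exact (hkey n m h).symm
  set T := G.biUnion batch with hT
  have hflat : ∀ F : ℕ → ℝ, ∑ m ∈ G, ∑ k ∈ batch m, F k = ∑ k ∈ T, F k :=
    fun F => (Finset.sum_biUnion hdisj).symm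
  have hTK : ∀ k ∈ T, k ∈ Finset.Icc 1 K := by
    intro k hk
    rw [hT, Finset.mem_biUnion] at hk
    obtain ⟨m, hm, hkm⟩ := hk
    exact hsubK m ((hGgood m hm).1).2 k hkm
  set Q : ℕ → ℝ := fun k => P ((k - 1) / B) with hQ
  have hbatchQ : ∀ m, 1 ≤ m → ∀ k ∈ batch m, (k - 1) / B = m - 1 := by
    intro m hm1 k hk
    simp only [hbatch, Finset.mem_Icc] at hk
    apply Nat.div_eq_of_lt_le
    · omega
    · have h5 : (m - 1 + 1) * B = m * B := by
        congr 1; omega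
      omega
  have hQpos : ∀ k ∈ Finset.Icc 1 K, 0 < Q k := by
    intro k hk
    simp only [Finset.mem_Icc] at hk
    apply hPpos
    have : (k - 1) / B < M := by
      rw [Nat.div_lt_iff_lt_mul hB]
      omega
    omega
  set lg := Real.log (1 + C * K / lam) with hlg
  -- Factor 1 bound
  have hratio : ∑ k ∈ T, q k / Q k ≤ 2 * lg := by
    have h1 : ∑ k ∈ T, q k / Q k = ∑ m ∈ G, (P m - P (m - 1)) / P (m - 1) := by
      rw [← hflat fun k => q k / Q k]
      apply Finset.sum_congr rfl
      intro m hm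
      obtain ⟨⟨hm1, hmM⟩, _⟩ := hGgood m hm
      have e : ∀ k ∈ batch m, q k / Q k = q k / P (m - 1) := by
        intro k hk
        have := hbatchQ m hm1 k hk
        simp only [hQ, this]
      rw [Finset.sum_congr rfl e, ← Finset.sum_div,
        ← hdiff m (by simp only [Finset.mem_Icc]; omega)]
    rw [h1]
    have h2 : ∀ m ∈ G, (P m - P (m - 1)) / P (m - 1) ≤
        2 * (Real.log (P m) - Real.log (P (m - 1))) := by
      intro m hm
      obtain ⟨⟨hm1, hmM⟩, hgood⟩ := hGgood m hm
      have hmm : m ∈ Finset.Icc 1 M := by simp only [Finset.mem_Icc]; omega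
      have ha : 0 < P (m - 1) := hPpos (m - 1) (by omega)
      have hb : 0 < P m := hPpos m hmM
      have hab : P (m - 1) ≤ P m := hPmono m hmm
      have hlog : 1 - P (m - 1) / P m ≤ Real.log (P m) - Real.log (P (m - 1)) := by
        have h6 := Real.log_le_sub_one_of_pos (show 0 < P (m - 1) / P m by positivity)
        rw [Real.log_div (ne_of_gt ha) (ne_of_gt hb)] at h6
        linarith
      have hstep : (P m - P (m - 1)) / P (m - 1) ≤ 2 * (1 - P (m - 1) / P m) := by
        have e : 2 * (1 - P (m - 1) / P m) = 2 * (P m - P (m - 1)) / P m := by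
          rw [one_sub_div (ne_of_gt hb), mul_div_assoc]
        rw [e, div_le_div_iff₀ ha hb]
        nlinarith [mul_nonneg (sub_nonneg.2 hab) (le_of_lt (sub_pos.2 hgood))]
      linarith
    calc ∑ m ∈ G, (P m - P (m - 1)) / P (m - 1)
        ≤ ∑ m ∈ G, 2 * (Real.log (P m) - Real.log (P (m - 1))) := Finset.sum_le_sum h2
      _ ≤ ∑ m ∈ Finset.Icc 1 M, 2 * (Real.log (P m) - Real.log (P (m - 1))) := by
          apply Finset.sum_le_sum_of_subset_of_nonneg hGsub
          intro m hm _
          have hm' : m ∈ Finset.Icc 1 M := hm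
          simp only [Finset.mem_Icc] at hm'
          have ha : 0 < P (m - 1) := hPpos (m - 1) (by omega)
          have := Real.log_le_log ha (hPmono m hm)
          linarith
      _ = 2 * (Real.log (P M) - Real.log (P 0)) := by
          rw [← Finset.mul_sum]
          congr 1
          rw [show Finset.Icc 1 M = Finset.Ico 1 (M + 1) from (Finset.Ico_add_one_right_eq_Icc 1 M).symm,
            Finset.sum_Ico_eq_sum_range]
          simp only [Nat.add_sub_cancel]
          have e : ∀ i ∈ Finset.range M,
              Real.log (P (1 + i)) - Real.log (P (1 + i - 1)) =
              Real.log (P (i + 1)) - Real.log (P i) := by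
            intro i _
            have e2 : 1 + i - 1 = i := by omega
            rw [e2, Nat.add_comm 1 i]
          rw [Finset.sum_congr rfl e, Finset.sum_range_sub fun i => Real.log (P i)]
      _ ≤ 2 * lg := by
          have hP0 : P 0 = lam * u := by rw [hP]; simp
          have h1p : (0 : ℝ) < 1 + C * K / lam := by positivity
          have hPM : P M ≤ lam * u * (1 + C * K / lam) := by
            rw [hP, hMB]
            have hs : ∑ t ∈ Finset.Icc 1 K, q t ≤ ∑ t ∈ Finset.Icc 1 K, C * u :=
              Finset.sum_le_sum fun t ht => hcov t ht
            have hcard : ∑ t ∈ Finset.Icc 1 K, (C * u) = K * (C * u) := by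
              rw [Finset.sum_const, Nat.card_Icc]
              simp [nsmul_eq_mul]
            have expand : lam * u * (1 + C * K / lam) = lam * u + C * K * u := by
              field_simp
            rw [expand]
            nlinarith
          have h7 := Real.log_le_log (hPpos M le_rfl) hPM
          rw [Real.log_mul (by positivity) (ne_of_gt h1p), ← hP0] at h7
          simp only [hlg]
          linarith
  have hS1 : ∑ k ∈ T, q k ^ 2 / Q k ≤ 2 * C * lg * u := by
    calc ∑ k ∈ T, q k ^ 2 / Q k ≤ ∑ k ∈ T, C * u * (q k / Q k) := by
          apply Finset.sum_le_sum
          intro k hk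
          have hkK := hTK k hk
          have hQk := hQpos k hkK
          have hqk := hq k hkK
          have h9 : q k ^ 2 ≤ C * u * q k := by nlinarith [hcov k hkK]
          calc q k ^ 2 / Q k ≤ C * u * q k / Q k := (div_le_div_iff_of_pos_right hQk).2 h9
            _ = C * u * (q k / Q k) := mul_div_assoc _ _ _
      _ = C * u * ∑ k ∈ T, q k / Q k := by rw [Finset.mul_sum]
      _ ≤ C * u * (2 * lg) := by
          apply mul_le_mul_of_nonneg_left hratio (by positivity)
      _ = 2 * C * lg * u := by ring
  -- Factor 2 bound
  have hS2 : ∑ k ∈ T, Q k * g k ^ 2 ≤ K * lam * u +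
      ∑ k ∈ Finset.Icc 1 K, ∑ t ∈ Finset.Ico 1 (batchStart B k), q t * g k ^ 2 := by
    have hsub2 : ∑ k ∈ T, Q k * g k ^ 2 ≤ ∑ k ∈ Finset.Icc 1 K, Q k * g k ^ 2 := by
      apply Finset.sum_le_sum_of_subset_of_nonneg (fun k hk => hTK k hk)
      intro k hk _
      exact mul_nonneg (le_of_lt (hQpos k hk)) (sq_nonneg _)
    have hper : ∀ k ∈ Finset.Icc 1 K, Q k * g k ^ 2 ≤
        lam * u + ∑ t ∈ Finset.Ico 1 (batchStart B k), q t * g k ^ 2 := by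
      intro k hk
      have hQdef : Q k = lam * u + ∑ t ∈ Finset.Ico 1 (batchStart B k), q t := by
        simp only [hQ]
        rw [hP]
        congr 1
        have e : Finset.Ico 1 (batchStart B k) = Finset.Icc 1 ((k - 1) / B * B) := by
          unfold batchStart
          rw [mul_comm B]
          exact Finset.Ico_add_one_right_eq_Icc 1 _
        rw [e]
      rw [hQdef, add_mul, Finset.sum_mul]
      have hgk0 := hg0 k hk
      have hgk1 := hg1 k hk
      have hsq : g k ^ 2 ≤ 1 := by nlinarith
      have h1 : lam * u * g k ^ 2 ≤ lam * u := by nlinarith [mul_pos hlam hu, hsq]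
      have h2 : ∑ t ∈ Finset.Ico 1 (batchStart B k), q t * g k ^ 2 =
          ∑ t ∈ Finset.Ico 1 (batchStart B k), q t * g k ^ 2 := rfl
      linarith
    calc ∑ k ∈ T, Q k * g k ^ 2 ≤ ∑ k ∈ Finset.Icc 1 K, Q k * g k ^ 2 := hsub2
      _ ≤ ∑ k ∈ Finset.Icc 1 K,
            (lam * u + ∑ t ∈ Finset.Ico 1 (batchStart B k), q t * g k ^ 2) :=
          Finset.sum_le_sum hper
      _ = K * lam * u +
          ∑ k ∈ Finset.Icc 1 K, ∑ t ∈ Finset.Ico 1 (batchStart B k), q t * g k ^ 2 := by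
          rw [Finset.sum_add_distrib, Finset.sum_const, Nat.card_Icc]
          simp [nsmul_eq_mul]
          ring
  -- Cauchy–Schwarz assembly
  calc ∑ m ∈ Finset.Icc 1 M \ Bad, ∑ k ∈ batch m, q k * g k
      = ∑ k ∈ T, q k * g k := hflat _
    _ = ∑ k ∈ T, Real.sqrt (q k ^ 2 / Q k) * Real.sqrt (Q k * g k ^ 2) := by
        apply Finset.sum_congr rfl
        intro k hk
        have hkK := hTK k hk
        have hQk := hQpos k hkK
        have hqk := hq k hkK
        have hgk := hg0 k hkK
        rw [Real.sqrt_div (sq_nonneg _), Real.sqrt_sq hqk,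
          Real.sqrt_mul (le_of_lt hQk), Real.sqrt_sq hgk]
        have hsq : Real.sqrt (Q k) ≠ 0 := ne_of_gt (Real.sqrt_pos.2 hQk)
        field_simp
    _ ≤ Real.sqrt (∑ k ∈ T, q k ^ 2 / Q k) * Real.sqrt (∑ k ∈ T, Q k * g k ^ 2) := by
        apply sqrtCS
        · intro k hk
          exact div_nonneg (sq_nonneg _) (le_of_lt (hQpos k (hTK k hk)))
        · intro k hk
          exact mul_nonneg (le_of_lt (hQpos k (hTK k hk))) (sq_nonneg _)
    _ ≤ Real.sqrt (2 * C * lg * u) *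
        Real.sqrt (K * lam * u +
          ∑ k ∈ Finset.Icc 1 K, ∑ t ∈ Finset.Ico 1 (batchStart B k), q t * g k ^ 2) :=
        mul_le_mul (Real.sqrt_le_sqrt hS1) (Real.sqrt_le_sqrt hS2)
          (Real.sqrt_nonneg _) (Real.sqrt_nonneg _)

/-- Bound on the good-batch term `T_good` in the proof of Lemma C.1 of the
paper.  The `m`-th batch consists of episodes `(m-1)·B + 1, …, m·B`. -/
theorem good_batch_term_bound
    {X : Type*} [Countable X]
    (K B : ℕ) (hK : 0 < K) (hB : 0 < B) (hBK : B ∣ K)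
    (p : ℕ → X → ℝ) (μ : X → ℝ)
    (hp_nonneg : ∀ k ∈ Finset.Icc 1 K, ∀ x, 0 ≤ p k x)
    (hp_summable : ∀ k ∈ Finset.Icc 1 K, Summable (p k))
    (hp_sum : ∀ k ∈ Finset.Icc 1 K, ∑' x, p k x = 1)
    (hμ_nonneg : ∀ x, 0 ≤ μ x)
    (hμ_summable : Summable μ)
    (hμ_sum : ∑' x, μ x = 1)
    (C : ℝ) (hC : 0 < C)
    (hcov : ∀ k ∈ Finset.Icc 1 K, ∀ x, p k x ≤ C * μ x)
    (lam : ℝ) (hlam : 1 ≤ lam)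
    (f : ℕ → X → ℝ)
    (hf : ∀ k ∈ Finset.Icc 1 K, ∀ x, f k x ∈ Set.Icc (0 : ℝ) 1) :
    ∑' x : {x : X // 0 < μ x},
        ∑ m ∈ Finset.Icc 1 (K / B) \ badBatches lam μ p B (K / B) (x : X),
          ∑ k ∈ Finset.Icc ((m - 1) * B + 1) (m * B), p k (x : X) * f k (x : X) ≤
      Real.sqrt (4 * C * Real.log (1 + C * K / lam) *
        (2 * K * lam +
          ∑ k ∈ Finset.Icc 1 K, ∑ t ∈ Finset.Ico 1 (batchStart B k),
            ∑' x, p t x * (f k x) ^ 2)) := by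
  classical
  have hlam0 : (0 : ℝ) < lam := lt_of_lt_of_le one_pos hlam
  have hMB : K / B * B = K := Nat.div_mul_cancel hBK
  have hlog0 : 0 ≤ Real.log (1 + C * K / lam) := by
    apply Real.log_nonneg
    have : 0 ≤ C * K / lam := by positivity
    linarith
  set lg := Real.log (1 + C * K / lam) with hlg
  set L : ℝ := 2 * C * lg with hL
  have hLnn : 0 ≤ L := by
    rw [hL]
    have : (0 : ℝ) ≤ 2 * C := by positivity
    exact mul_nonneg this hlog0
  -- t in earlier batches lies in Icc 1 K
  have htIcc : ∀ k ∈ Finset.Icc 1 K, ∀ t ∈ Finset.Ico 1 (batchStart B k),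
      t ∈ Finset.Icc 1 K := by
    intro k hk t ht
    simp only [Finset.mem_Icc] at hk ⊢
    simp only [Finset.mem_Ico] at ht
    have h1 : batchStart B k ≤ k := by
      unfold batchStart
      have h2 := Nat.div_mul_le_self (k - 1) B
      have e : B * ((k - 1) / B) = (k - 1) / B * B := Nat.mul_comm _ _
      omega
    omega
  set W : X → ℝ := fun x => K * lam * μ x +
    ∑ k ∈ Finset.Icc 1 K, ∑ t ∈ Finset.Ico 1 (batchStart B k), p t x * f k x ^ 2 with hW
  have hsum_tk : ∀ k ∈ Finset.Icc 1 K, ∀ t ∈ Finset.Ico 1 (batchStart B k),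
      Summable fun x => p t x * f k x ^ 2 := by
    intro k hk t ht
    have htK := htIcc k hk t ht
    apply Summable.of_nonneg_of_le (fun x => mul_nonneg (hp_nonneg t htK x) (sq_nonneg _))
      (fun x => ?_) (hp_summable t htK)
    obtain ⟨hfk0, hfk1⟩ := hf k hk x
    have hsq : f k x ^ 2 ≤ 1 := by nlinarith
    nlinarith [hp_nonneg t htK x, hsq]
  have hsum_inner : ∀ k ∈ Finset.Icc 1 K,
      Summable fun x => ∑ t ∈ Finset.Ico 1 (batchStart B k), p t x * f k x ^ 2 :=
    fun k hk => summable_sum fun t ht => hsum_tk k hk t ht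
  have hsum_outer : Summable fun x =>
      ∑ k ∈ Finset.Icc 1 K, ∑ t ∈ Finset.Ico 1 (batchStart B k), p t x * f k x ^ 2 :=
    summable_sum fun k hk => hsum_inner k hk
  have hWsum : Summable W := (hμ_summable.mul_left (K * lam)).add hsum_outer
  have hWnn : ∀ x, 0 ≤ W x := by
    intro x
    apply add_nonneg
    · have : (0 : ℝ) ≤ (K : ℝ) * lam := by positivity
      exact mul_nonneg this (hμ_nonneg x)
    · apply Finset.sum_nonneg
      intro k hk
      apply Finset.sum_nonneg
      intro t ht
      exact mul_nonneg (hp_nonneg t (htIcc k hk t ht) x) (sq_nonneg _)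
  -- pointwise bound via `core`
  have hpoint : ∀ x : {x : X // 0 < μ x},
      (∑ m ∈ Finset.Icc 1 (K / B) \ badBatches lam μ p B (K / B) (x : X),
        ∑ k ∈ Finset.Icc ((m - 1) * B + 1) (m * B), p k (x : X) * f k (x : X)) ≤
      Real.sqrt (L * μ (x : X)) * Real.sqrt (W (x : X)) := by
    rintro ⟨x, hx⟩
    have h := core K B hB hBK (fun k => p k x) (fun k => f k x) (μ x) C lam hx hC hlam0
      (fun k hk => hp_nonneg k hk x) (fun k hk => hcov k hk x)
      (fun k hk => (hf k hk x).1) (fun k hk => (hf k hk x).2)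
      (fun m => Pseq lam μ p B m x) (fun m => rfl)
      (badBatches lam μ p B (K / B) x) rfl
    simpa only [hL, hlg, hW, mul_comm, mul_assoc, mul_left_comm] using h
  have hgnn : ∀ x : {x : X // 0 < μ x},
      0 ≤ ∑ m ∈ Finset.Icc 1 (K / B) \ badBatches lam μ p B (K / B) (x : X),
        ∑ k ∈ Finset.Icc ((m - 1) * B + 1) (m * B), p k (x : X) * f k (x : X) := by
    intro x
    apply Finset.sum_nonneg
    intro m hm
    apply Finset.sum_nonneg
    intro k hk
    have hm' : m ∈ Finset.Icc 1 (K / B) := (Finset.mem_sdiff.1 hm).1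
    have hkK : k ∈ Finset.Icc 1 K := by
      simp only [Finset.mem_Icc] at hm' hk ⊢
      have h2 : m * B ≤ K / B * B := Nat.mul_le_mul_right B hm'.2
      omega
    exact mul_nonneg (hp_nonneg k hkK _) ((hf k hkK _).1)
  have hmaj_full : Summable fun x : X => L * μ x + W x := (hμ_summable.mul_left L).add hWsum
  have hmaj : Summable fun x : {x : X // 0 < μ x} =>
      Real.sqrt (L * μ (x : X)) * Real.sqrt (W (x : X)) := by
    apply Summable.of_nonneg_of_le
      (fun x => mul_nonneg (Real.sqrt_nonneg _) (Real.sqrt_nonneg _))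
      (fun x => sqrt_mul_sqrt_le _ _ (mul_nonneg hLnn (hμ_nonneg _)) (hWnn _))
    exact ((hmaj_full.mul_left (1 / 2)).subtype _)
  have hgsum : Summable fun x : {x : X // 0 < μ x} =>
      ∑ m ∈ Finset.Icc 1 (K / B) \ badBatches lam μ p B (K / B) (x : X),
        ∑ k ∈ Finset.Icc ((m - 1) * B + 1) (m * B), p k (x : X) * f k (x : X) :=
    Summable.of_nonneg_of_le hgnn
      (fun x => (hpoint x).trans (sqrt_mul_sqrt_le _ _ (mul_nonneg hLnn (hμ_nonneg _)) (hWnn _)))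
      ((hmaj_full.mul_left (1 / 2)).subtype _)
  set D : ℝ := ∑ k ∈ Finset.Icc 1 K, ∑ t ∈ Finset.Ico 1 (batchStart B k),
    ∑' x, p t x * f k x ^ 2 with hD
  have hD0 : 0 ≤ D := by
    rw [hD]
    apply Finset.sum_nonneg
    intro k hk
    apply Finset.sum_nonneg
    intro t ht
    exact tsum_nonneg fun x => mul_nonneg (hp_nonneg t (htIcc k hk t ht) x) (sq_nonneg _)
  have hA : ∑' x : {x : X // 0 < μ x}, L * μ (x : X) ≤ L := by
    calc ∑' x : {x : X // 0 < μ x}, L * μ (x : X)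
        ≤ ∑' x, L * μ x :=
          tsum_subtype_le_tsum' _ (fun x => mul_nonneg hLnn (hμ_nonneg x))
            (hμ_summable.mul_left L) _
      _ = L := by rw [tsum_mul_left, hμ_sum, mul_one]
  have hBB : ∑' x : {x : X // 0 < μ x}, W (x : X) ≤ K * lam + D := by
    calc ∑' x : {x : X // 0 < μ x}, W (x : X)
        ≤ ∑' x, W x := tsum_subtype_le_tsum' W hWnn hWsum _
      _ = K * lam + D := by
          rw [hW]
          rw [Summable.tsum_add (hμ_summable.mul_left (K * lam)) hsum_outer]
          congr 1
          · rw [tsum_mul_left, hμ_sum, mul_one]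
          · rw [Summable.tsum_finsetSum fun k hk => hsum_inner k hk]
            exact Finset.sum_congr rfl fun k hk => Summable.tsum_finsetSum fun t ht => hsum_tk k hk t ht
  calc ∑' x : {x : X // 0 < μ x},
        ∑ m ∈ Finset.Icc 1 (K / B) \ badBatches lam μ p B (K / B) (x : X),
          ∑ k ∈ Finset.Icc ((m - 1) * B + 1) (m * B), p k (x : X) * f k (x : X)
      ≤ ∑' x : {x : X // 0 < μ x}, Real.sqrt (L * μ (x : X)) * Real.sqrt (W (x : X)) :=
        Summable.tsum_le_tsum hpoint hgsum hmaj
    _ ≤ Real.sqrt (∑' x : {x : X // 0 < μ x}, L * μ (x : X)) *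
        Real.sqrt (∑' x : {x : X // 0 < μ x}, W (x : X)) :=
        tsumCS _ _ (fun x => mul_nonneg hLnn (hμ_nonneg _)) (fun x => hWnn _)
          ((hμ_summable.mul_left L).subtype _) (hWsum.subtype _)
    _ ≤ Real.sqrt L * Real.sqrt (K * lam + D) :=
        mul_le_mul (Real.sqrt_le_sqrt hA) (Real.sqrt_le_sqrt hBB)
          (Real.sqrt_nonneg _) (Real.sqrt_nonneg _)
    _ = Real.sqrt (L * (K * lam + D)) := (Real.sqrt_mul hLnn _).symm
    _ ≤ Real.sqrt (4 * C * lg * (2 * K * lam + D)) := by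
        apply Real.sqrt_le_sqrt
        rw [hL]
        have h1 : 0 ≤ C * lg * ((K : ℝ) * lam) := by positivity
        have h2 : 0 ≤ C * lg * D := mul_nonneg (by positivity) hD0
        nlinarith
end
end

section
/- Let K, B, d be positive integers with B dividing K, and for k ∈ {1,…,K} let [k] := B·⌊(k−1)/B⌋ + 1. Let λ > 0, H > 0, and let φ^(1),…,φ^(K) ∈ ℝ^d satisfy ‖φ^(k)‖₂² ≤ H for all k. Define V_0 := λ·I_d and V_k := λ·I_d + ∑_{j=1}^{k} φ^(j)(φ^(j))ᵀ, and the bad-round set Ψ := {k ∈ {1,…,K} : ‖φ^(k)‖_{V_{[k]−1}^{-1}} > 2·‖φ^(k)‖_{V_{k−1}^{-1}}}. Then |Ψ| ≤ (B·d / (2·log 2))·log(1 + K·H/(d·λ)). -/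
open scoped BigOperators Matrix

noncomputable section

/-- Design matrix `V_k := λ·I_d + ∑_{j=1}^{k} φ^(j) (φ^(j))ᵀ` (so `V_0 = λ·I_d`). -/
def designMat (d : ℕ) (lam : ℝ) (φ : ℕ → Fin d → ℝ) (k : ℕ) :
    Matrix (Fin d) (Fin d) ℝ :=
  lam • (1 : Matrix (Fin d) (Fin d) ℝ) +
    ∑ j ∈ Finset.Icc 1 k, Matrix.vecMulVec (φ j) (φ j)

/-- `‖v‖_A := √(vᵀ A v)`. -/
def matNorm {d : ℕ} (A : Matrix (Fin d) (Fin d) ℝ) (v : Fin d → ℝ) : ℝ :=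
  Real.sqrt (v ⬝ᵥ A.mulVec v)

namespace BadRoundAux

open Matrix

variable {d : ℕ}

lemma quad_diag_eval (U : Matrix (Fin d) (Fin d) ℝ) (w : Fin d → ℝ) (y : Fin d → ℝ) :
    y ⬝ᵥ (U * diagonal w * star U) *ᵥ y = ∑ i, w i * ((star U *ᵥ y) i)^2 := by
  have hsU : star U = Uᵀ := by
    rw [Matrix.star_eq_conjTranspose, conjTranspose_eq_transpose_of_trivial]
  rw [← Matrix.mulVec_mulVec, ← Matrix.mulVec_mulVec, Matrix.dotProduct_mulVec, hsU,
    ← Matrix.mulVec_transpose]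
  simp only [Matrix.mulVec_diagonal, dotProduct, sq]
  exact Finset.sum_congr rfl fun i _ => by ring

lemma inv_of_unitary_diag {M U : Matrix (Fin d) (Fin d) ℝ} {ev : Fin d → ℝ}
    (hUU : star U * U = 1) (hUU' : U * star U = 1)
    (hspec : M = U * diagonal ev * star U) (hev : ∀ i, ev i ≠ 0) :
    M⁻¹ = U * diagonal (fun i => (ev i)⁻¹) * star U := by
  apply Matrix.inv_eq_left_inv
  rw [hspec]
  have hdiag : diagonal (fun i => (ev i)⁻¹) * diagonal ev = 1 := by
    rw [diagonal_mul_diagonal]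
    simp only [fun i => inv_mul_cancel₀ (hev i)]
    exact diagonal_one
  calc (U * diagonal (fun i => (ev i)⁻¹) * star U) * (U * diagonal ev * star U)
      = U * (diagonal (fun i => (ev i)⁻¹) * ((star U * U) * diagonal ev)) * star U := by
        simp only [Matrix.mul_assoc]
    _ = 1 := by rw [hUU, Matrix.one_mul, hdiag, Matrix.mul_one, hUU']

lemma real_spectral (M : Matrix (Fin d) (Fin d) ℝ) (hM : M.IsHermitian) :
    M = (hM.eigenvectorUnitary : Matrix (Fin d) (Fin d) ℝ) * diagonal hM.eigenvalues *
      (star (hM.eigenvectorUnitary : Matrix (Fin d) (Fin d) ℝ)) := by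
  simpa using hM.spectral_theorem

lemma eig_le_one {M : Matrix (Fin d) (Fin d) ℝ} (hM : M.PosDef)
    (h1 : (1 - M).PosSemidef) (i : Fin d) : hM.1.eigenvalues i ≤ 1 := by
  set v : Fin d → ℝ := ⇑(hM.1.eigenvectorBasis i) with hv
  have hnorm : v ⬝ᵥ v = 1 := by
    have h := hM.1.eigenvectorBasis.orthonormal.1 i
    have : (inner ℝ (hM.1.eigenvectorBasis i) (hM.1.eigenvectorBasis i) : ℝ) = 1 := by
      rw [real_inner_self_eq_norm_sq, h]; norm_num
    rw [EuclideanSpace.inner_eq_star_dotProduct] at this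
    simpa [dotProduct, mul_comm] using this
  have hMv : M *ᵥ v = hM.1.eigenvalues i • v := hM.1.mulVec_eigenvectorBasis i
  have := h1.dotProduct_mulVec_nonneg v
  simp only [sub_mulVec, one_mulVec, dotProduct_sub, hMv, dotProduct_smul, star_trivial,
    smul_eq_mul, hnorm] at this
  linarith

lemma det_prod_eig {M : Matrix (Fin d) (Fin d) ℝ} (hM : M.IsHermitian) :
    M.det = ∏ i, hM.eigenvalues i := by simpa using hM.det_eq_prod_eigenvalues

lemma quad_inv_le {M : Matrix (Fin d) (Fin d) ℝ} (hM : M.PosDef)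
    (h1 : (1 - M).PosSemidef) (y : Fin d → ℝ) :
    y ⬝ᵥ M⁻¹ *ᵥ y ≤ (M.det)⁻¹ * (y ⬝ᵥ y) := by
  set U := (hM.1.eigenvectorUnitary : Matrix (Fin d) (Fin d) ℝ) with hU
  have hUU : star U * U = 1 := Matrix.mem_unitaryGroup_iff'.mp hM.1.eigenvectorUnitary.2
  have hUU' : U * star U = 1 := Matrix.mem_unitaryGroup_iff.mp hM.1.eigenvectorUnitary.2
  set ev := hM.1.eigenvalues with hev
  have hpos : ∀ i, 0 < ev i := fun i => hM.eigenvalues_pos i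
  have hle1 : ∀ i, ev i ≤ 1 := fun i => eig_le_one hM h1 i
  have hinv : M⁻¹ = U * diagonal (fun i => (ev i)⁻¹) * star U :=
    inv_of_unitary_diag hUU hUU' (real_spectral M hM.1) (fun i => (hpos i).ne')
  set z := star U *ᵥ y with hz
  have hL : y ⬝ᵥ M⁻¹ *ᵥ y = ∑ i, (ev i)⁻¹ * (z i)^2 := by
    rw [hinv, quad_diag_eval]
  have hR : y ⬝ᵥ y = ∑ i, (z i)^2 := by
    have h1' : y ⬝ᵥ y = y ⬝ᵥ (U * diagonal (fun _ => (1:ℝ)) * star U) *ᵥ y := by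
      have : U * diagonal (fun _ => (1:ℝ)) * star U = 1 := by
        rw [show diagonal (fun _ => (1:ℝ)) = 1 from diagonal_one, Matrix.mul_one, hUU']
      rw [this, Matrix.one_mulVec]
    rw [h1', quad_diag_eval]; simp [hz]
  have hdet : M.det = ∏ i, ev i := det_prod_eig hM.1
  have hdetpos : 0 < ∏ i, ev i := Finset.prod_pos fun i _ => hpos i
  rw [hL, hR, hdet, Finset.mul_sum]
  apply Finset.sum_le_sum
  intro i _
  have key : ∏ j, ev j ≤ ev i := by
    rw [← Finset.mul_prod_erase Finset.univ ev (Finset.mem_univ i)]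
    have : ∏ j ∈ Finset.univ.erase i, ev j ≤ 1 :=
      Finset.prod_le_one (fun j _ => (hpos j).le) (fun j _ => hle1 j)
    nlinarith [hpos i]
  have h2 : (ev i)⁻¹ ≤ (∏ j, ev j)⁻¹ := by
    apply inv_anti₀ hdetpos key
  nlinarith [sq_nonneg (z i)]

lemma conj_quad {P A : Matrix (Fin d) (Fin d) ℝ} (hP : Pᵀ = P) (x : Fin d → ℝ) :
    x ⬝ᵥ (P * A * P) *ᵥ x = (P *ᵥ x) ⬝ᵥ (A *ᵥ (P *ᵥ x)) := by
  rw [← Matrix.mulVec_mulVec, ← Matrix.mulVec_mulVec, Matrix.dotProduct_mulVec,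
    ← Matrix.mulVec_transpose, hP]

lemma herm_transpose {A : Matrix (Fin d) (Fin d) ℝ} (hA : A.IsHermitian) : Aᵀ = A := by
  rw [← Matrix.conjTranspose_eq_transpose_of_trivial]; exact hA

lemma loewner_key {A B : Matrix (Fin d) (Fin d) ℝ} (hA : A.PosDef) (hB : B.PosDef)
    (hAB : (B - A).PosSemidef) :
    A.det ≤ B.det ∧ ∀ x : Fin d → ℝ, x ⬝ᵥ A⁻¹ *ᵥ x ≤ (B.det / A.det) * (x ⬝ᵥ B⁻¹ *ᵥ x) := by
  obtain ⟨S, hSh, hSS⟩ : ∃ S : Matrix (Fin d) (Fin d) ℝ, Sᵀ = S ∧ S * S = B := by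
    set U := (hB.1.eigenvectorUnitary : Matrix (Fin d) (Fin d) ℝ) with hU
    have hUU : star U * U = 1 := Matrix.mem_unitaryGroup_iff'.mp hB.1.eigenvectorUnitary.2
    have hsU : star U = Uᵀ := by
      rw [Matrix.star_eq_conjTranspose, conjTranspose_eq_transpose_of_trivial]
    refine ⟨U * diagonal (fun i => Real.sqrt (hB.1.eigenvalues i)) * star U, ?_, ?_⟩
    · rw [Matrix.transpose_mul, Matrix.transpose_mul, diagonal_transpose, hsU,
        Matrix.transpose_transpose, Matrix.mul_assoc]
    · have hD : diagonal (fun i => Real.sqrt (hB.1.eigenvalues i)) *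
          diagonal (fun i => Real.sqrt (hB.1.eigenvalues i)) = diagonal hB.1.eigenvalues := by
        rw [diagonal_mul_diagonal]
        congr 1
        funext i
        exact Real.mul_self_sqrt (hB.eigenvalues_pos i).le
      calc U * diagonal (fun i => Real.sqrt (hB.1.eigenvalues i)) * star U *
            (U * diagonal (fun i => Real.sqrt (hB.1.eigenvalues i)) * star U)
          = U * (diagonal (fun i => Real.sqrt (hB.1.eigenvalues i)) * ((star U * U) *
            diagonal (fun i => Real.sqrt (hB.1.eigenvalues i)))) * star U := by
            simp only [Matrix.mul_assoc]
        _ = B := by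
            rw [hUU, Matrix.one_mul, hD]
            exact (real_spectral B hB.1).symm
  have hdS : S.det ≠ 0 := by
    intro h
    have : B.det = 0 := by rw [← hSS, Matrix.det_mul, h, zero_mul]
    exact hB.det_pos.ne' this
  have hSunit : IsUnit S.det := isUnit_iff_ne_zero.mpr hdS
  have hSiS : S⁻¹ * S = 1 := Matrix.nonsing_inv_mul S hSunit
  have hSSi : S * S⁻¹ = 1 := Matrix.mul_nonsing_inv S hSunit
  have hSih : S⁻¹ᵀ = S⁻¹ := by rw [Matrix.transpose_nonsing_inv, hSh]
  have hSih' : S⁻¹ᴴ = S⁻¹ := by rw [Matrix.conjTranspose_eq_transpose_of_trivial, hSih]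
  set M := S⁻¹ * A * S⁻¹ with hMdef
  have hM_psd : M.PosSemidef := by
    have := hA.posSemidef.conjTranspose_mul_mul_same S⁻¹
    rwa [hSih'] at this
  have hM_pd : M.PosDef := by
    refine Matrix.PosDef.of_dotProduct_mulVec_pos hM_psd.1 fun x hx => ?_
    have hy : S⁻¹ *ᵥ x ≠ 0 := by
      intro h
      apply hx
      have : (S * S⁻¹) *ᵥ x = x := by rw [hSSi, Matrix.one_mulVec]
      rw [← this, ← Matrix.mulVec_mulVec, h, Matrix.mulVec_zero]
    have := hA.dotProduct_mulVec_pos (x := S⁻¹ *ᵥ x) hy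
    rw [star_trivial, hMdef, conj_quad hSih]
    simpa using this
  have h1M : (1 - M).PosSemidef := by
    have hcalc : (1 : Matrix (Fin d) (Fin d) ℝ) - M = S⁻¹ * (B - A) * S⁻¹ := by
      rw [Matrix.mul_sub, Matrix.sub_mul, hMdef]
      congr 1
      rw [← hSS, ← Matrix.mul_assoc, hSiS, Matrix.one_mul, hSSi]
    rw [hcalc]
    have := hAB.conjTranspose_mul_mul_same S⁻¹
    rwa [hSih'] at this
  have hdetS : S⁻¹.det = S.det⁻¹ := by
    rw [Matrix.det_nonsing_inv, Ring.inverse_eq_inv']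
  have hdetB : S.det * S.det = B.det := by rw [← Matrix.det_mul, hSS]
  have hdetM : M.det = A.det / B.det := by
    rw [hMdef, Matrix.det_mul, Matrix.det_mul, hdetS, ← hdetB]
    field_simp
  have hdetM_le : M.det ≤ 1 := by
    rw [det_prod_eig hM_pd.1]
    exact Finset.prod_le_one (fun i _ => (hM_pd.eigenvalues_pos i).le)
      (fun i _ => eig_le_one hM_pd h1M i)
  have hdetAB : A.det ≤ B.det := by
    rw [hdetM, div_le_one hB.det_pos] at hdetM_le
    exact hdetM_le
  refine ⟨hdetAB, fun x => ?_⟩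
  have hAinv : A⁻¹ = S⁻¹ * M⁻¹ * S⁻¹ := by
    have hA_eq : A = S * M * S := by
      rw [hMdef, ← Matrix.mul_assoc, ← Matrix.mul_assoc, hSSi, Matrix.one_mul,
        Matrix.mul_assoc, hSiS, Matrix.mul_one]
    rw [hA_eq, Matrix.mul_inv_rev, Matrix.mul_inv_rev, Matrix.mul_assoc]
  have hBinv : B⁻¹ = S⁻¹ * S⁻¹ := by rw [← hSS, Matrix.mul_inv_rev]
  set y := S⁻¹ *ᵥ x with hy
  have hL : x ⬝ᵥ A⁻¹ *ᵥ x = y ⬝ᵥ M⁻¹ *ᵥ y := by rw [hAinv, conj_quad hSih]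
  have hR : x ⬝ᵥ B⁻¹ *ᵥ x = y ⬝ᵥ y := by
    have : S⁻¹ * S⁻¹ = S⁻¹ * 1 * S⁻¹ := by rw [Matrix.mul_one]
    rw [hBinv, this, conj_quad hSih, Matrix.one_mulVec]
  rw [hL, hR]
  have := quad_inv_le hM_pd h1M y
  rw [hdetM] at this
  calc y ⬝ᵥ M⁻¹ *ᵥ y ≤ (A.det / B.det)⁻¹ * (y ⬝ᵥ y) := this
    _ = (B.det / A.det) * (y ⬝ᵥ y) := by rw [inv_div]

lemma vecMulVec_mulVec_eq (u x : Fin d → ℝ) : vecMulVec u u *ᵥ x = (u ⬝ᵥ x) • u := by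
  ext i
  simp [vecMulVec, Matrix.mulVec, dotProduct, Finset.mul_sum, mul_assoc, Pi.smul_apply,
    smul_eq_mul, Finset.sum_mul]
  exact Finset.sum_congr rfl fun j _ => by ring

lemma vecMulVec_psd (u : Fin d → ℝ) : (vecMulVec u u).PosSemidef := by
  refine Matrix.PosSemidef.of_dotProduct_mulVec_nonneg ?_ ?_
  · ext i j
    simp [Matrix.conjTranspose_apply, vecMulVec, mul_comm]
  · intro x
    rw [vecMulVec_mulVec_eq, star_trivial, dotProduct_smul, smul_eq_mul, dotProduct_comm]
    exact mul_self_nonneg _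

lemma sum_vecMulVec_psd (s : Finset ℕ) (φ : ℕ → Fin d → ℝ) :
    (∑ j ∈ s, vecMulVec (φ j) (φ j)).PosSemidef := by
  classical
  induction s using Finset.induction_on with
  | empty => simpa using Matrix.PosSemidef.zero
  | insert a s h ih =>
    rw [Finset.sum_insert h]
    exact (vecMulVec_psd _).add ih

lemma designMat_posDef (lam : ℝ) (hlam : 0 < lam) (φ : ℕ → Fin d → ℝ) (k : ℕ) :
    (designMat d lam φ k).PosDef := by
  have h1 : (lam • (1 : Matrix (Fin d) (Fin d) ℝ)).PosDef := by
    rw [Matrix.smul_one_eq_diagonal]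
    exact Matrix.PosDef.diagonal fun i => hlam
  exact h1.add_posSemidef (sum_vecMulVec_psd _ φ)

lemma designMat_mono (lam : ℝ) (φ : ℕ → Fin d → ℝ) {m k : ℕ} (h : m ≤ k) :
    (designMat d lam φ k - designMat d lam φ m).PosSemidef := by
  have hsub : Finset.Icc 1 m ⊆ Finset.Icc 1 k :=
    Finset.Icc_subset_Icc le_rfl h
  have hsd := Finset.sum_sdiff (f := fun j => vecMulVec (φ j) (φ j)) hsub
  have hdiff : designMat d lam φ k - designMat d lam φ m =
      ∑ j ∈ Finset.Icc 1 k \ Finset.Icc 1 m, vecMulVec (φ j) (φ j) := by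
    unfold designMat
    rw [← hsd]; abel
  rw [hdiff]
  exact sum_vecMulVec_psd _ φ

lemma trace_eq_sum_eig {M : Matrix (Fin d) (Fin d) ℝ} (hM : M.IsHermitian) :
    M.trace = ∑ i, hM.eigenvalues i := by
  have h := congrArg Matrix.trace (real_spectral M hM)
  rw [h, Matrix.trace_mul_cycle,
    Matrix.mem_unitaryGroup_iff'.mp hM.eigenvectorUnitary.2, Matrix.one_mul,
    Matrix.trace_diagonal]

lemma trace_designMat (lam : ℝ) (φ : ℕ → Fin d → ℝ) (k : ℕ) :
    (designMat d lam φ k).trace = lam * d + ∑ j ∈ Finset.Icc 1 k, (φ j ⬝ᵥ φ j) := by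
  unfold designMat
  rw [Matrix.trace_add, Matrix.trace_smul, Matrix.trace_one, Matrix.trace_sum]
  have h1 : ∀ j, (vecMulVec (φ j) (φ j)).trace = φ j ⬝ᵥ φ j := fun j => by
    simp [Matrix.trace, Matrix.diag, vecMulVec, dotProduct]
  simp only [h1, smul_eq_mul, Fintype.card_fin]

lemma det_le_trace_pow {M : Matrix (Fin d) (Fin d) ℝ} (hM : M.PosDef) (hd : 0 < d)
    {T : ℝ} (hT : M.trace ≤ T) : M.det ≤ (T / d) ^ d := by
  set μ := hM.1.eigenvalues with hμ
  have hμpos : ∀ i, 0 < μ i := fun i => hM.eigenvalues_pos i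
  have hdR : (0:ℝ) < d := by exact_mod_cast hd
  have hAM : ∏ i, μ i ^ ((d:ℝ)⁻¹) ≤ ∑ i, (d:ℝ)⁻¹ * μ i := by
    apply Real.geom_mean_le_arith_mean_weighted
    · intro i _; positivity
    · simp [Finset.card_univ]
      field_simp
    · intro i _; exact (hμpos i).le
  have hprod : ∏ i, μ i ^ ((d:ℝ)⁻¹) = (∏ i, μ i) ^ ((d:ℝ)⁻¹) := by
    rw [← Real.finset_prod_rpow _ _ (fun i _ => (hμpos i).le)]
  have hsum : ∑ i, (d:ℝ)⁻¹ * μ i = M.trace / d := by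
    rw [← Finset.mul_sum, ← trace_eq_sum_eig hM.1]; ring
  have h1 : ((∏ i, μ i) ^ ((d:ℝ)⁻¹) : ℝ) ≤ T / d := by
    rw [← hprod]
    refine hAM.trans ?_
    rw [hsum]
    gcongr
  have hPpos : 0 < ∏ i, μ i := Finset.prod_pos fun i _ => hμpos i
  have h2 : ((∏ i, μ i) ^ ((d:ℝ)⁻¹)) ^ (d:ℝ) ≤ (T / d) ^ (d:ℝ) := by
    apply Real.rpow_le_rpow (Real.rpow_nonneg hPpos.le _) h1 hdR.le
  rw [← Real.rpow_mul hPpos.le, inv_mul_cancel₀ hdR.ne', Real.rpow_one] at h2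
  rw [det_prod_eig hM.1]
  calc ∏ i, μ i ≤ (T / d) ^ (d:ℝ) := h2
    _ = (T / d) ^ (d:ℕ) := Real.rpow_natCast _ d

end BadRoundAux

/-- Bound on the number of bad rounds, established via a determinant argument
in the proof of Lemma D.1 of the paper. -/
theorem bad_round_count_bound
    (K B d : ℕ) (hK : 0 < K) (hB : 0 < B) (hd : 0 < d) (hBK : B ∣ K)
    (lam : ℝ) (hlam : 0 < lam) (H : ℝ) (hH : 0 < H)
    (φ : ℕ → Fin d → ℝ)
    (hφ : ∀ k ∈ Finset.Icc 1 K, φ k ⬝ᵥ φ k ≤ H) :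
    ((((Finset.Icc 1 K).filter fun k =>
        2 * matNorm (designMat d lam φ (k - 1))⁻¹ (φ k) <
          matNorm (designMat d lam φ (batchStart B k - 1))⁻¹ (φ k)).card : ℝ)) ≤
      (B * d / (2 * Real.log 2)) * Real.log (1 + K * H / (d * lam)) := by
  classical
  set V := designMat d lam φ with hVdef
  have hPD : ∀ m, (V m).PosDef := fun m => BadRoundAux.designMat_posDef lam hlam φ m
  have hmono : ∀ {m k : ℕ}, m ≤ k → (V m).det ≤ (V k).det := fun h =>
    (BadRoundAux.loewner_key (hPD _) (hPD _) (BadRoundAux.designMat_mono lam φ h)).1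
  set Ψ := (Finset.Icc 1 K).filter (fun k =>
      2 * matNorm (V (k - 1))⁻¹ (φ k) < matNorm (V (batchStart B k - 1))⁻¹ (φ k)) with hΨdef
  -- Step A : each bad round forces a determinant jump
  have hbad : ∀ k ∈ Ψ, 4 * (V (batchStart B k - 1)).det < (V (k - 1)).det := by
    intro k hk
    rw [hΨdef, Finset.mem_filter] at hk
    obtain ⟨hk1, hcond⟩ := hk
    have hmk : batchStart B k - 1 ≤ k - 1 := by
      have h1 : B * ((k - 1) / B) ≤ k - 1 := by
        rw [mul_comm]; exact Nat.div_mul_le_self _ _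
      simp only [batchStart]
      omega
    have hb0 : 0 ≤ φ k ⬝ᵥ (V (k - 1))⁻¹ *ᵥ φ k := by
      simpa using ((hPD (k - 1)).inv).posSemidef.dotProduct_mulVec_nonneg (φ k)
    have ha0 : 0 ≤ φ k ⬝ᵥ (V (batchStart B k - 1))⁻¹ *ᵥ φ k := by
      simpa using ((hPD (batchStart B k - 1)).inv).posSemidef.dotProduct_mulVec_nonneg (φ k)
    have hsq : 4 * (φ k ⬝ᵥ (V (k - 1))⁻¹ *ᵥ φ k) <
        φ k ⬝ᵥ (V (batchStart B k - 1))⁻¹ *ᵥ φ k := by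
      have hnn : 0 ≤ matNorm (V (k - 1))⁻¹ (φ k) := Real.sqrt_nonneg _
      have h2 := mul_self_lt_mul_self (by linarith) hcond
      rw [matNorm, matNorm] at h2
      have e1 := Real.mul_self_sqrt hb0
      have e2 := Real.mul_self_sqrt ha0
      nlinarith
    have hφne : φ k ≠ 0 := by
      intro h0
      rw [h0] at hsq
      simp at hsq
    have hbpos : 0 < φ k ⬝ᵥ (V (k - 1))⁻¹ *ᵥ φ k := by
      simpa using ((hPD (k - 1)).inv).dotProduct_mulVec_pos hφne
    have key := (BadRoundAux.loewner_key (hPD (batchStart B k - 1)) (hPD (k - 1))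
      (BadRoundAux.designMat_mono lam φ hmk)).2 (φ k)
    have hdA := (hPD (batchStart B k - 1)).det_pos
    have h4 : 4 < (V (k - 1)).det / (V (batchStart B k - 1)).det := by
      have := hsq.trans_le key
      have := (mul_lt_mul_iff_of_pos_right hbpos).mp (by linarith [this] :
        4 * (φ k ⬝ᵥ (V (k - 1))⁻¹ *ᵥ φ k) <
          ((V (k - 1)).det / (V (batchStart B k - 1)).det) * (φ k ⬝ᵥ (V (k - 1))⁻¹ *ᵥ φ k))
      linarith
    rw [lt_div_iff₀ hdA] at h4
    linarith
  -- Step B : counting via batches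
  set g : ℕ → ℕ := fun k => (k - 1) / B with hgdef
  set S := Ψ.image g with hSdef
  have hcard : Ψ.card ≤ B * S.card := by
    rw [hSdef, Finset.card_eq_sum_card_image g Ψ]
    have hfib : ∀ b ∈ Ψ.image g, (Ψ.filter fun k => g k = b).card ≤ B := by
      intro b _
      have hsub : Ψ.filter (fun k => g k = b) ⊆ Finset.Icc (b * B + 1) (b * B + B) := by
        intro k hk
        rw [Finset.mem_filter] at hk
        obtain ⟨hkΨ, hgk⟩ := hk
        rw [hΨdef, Finset.mem_filter] at hkΨ
        have hk1 := Finset.mem_Icc.mp hkΨ.1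
        rw [hgdef] at hgk
        simp only at hgk
        have h1 : b * B ≤ k - 1 := by
          rw [← hgk]; exact Nat.div_mul_le_self _ _
        have h2 : k - 1 < (b + 1) * B := by
          exact (Nat.div_lt_iff_lt_mul hB).mp (by omega)
        have h3 : (b + 1) * B = b * B + B := by ring
        rw [Finset.mem_Icc]
        omega
      calc (Ψ.filter fun k => g k = b).card ≤ (Finset.Icc (b * B + 1) (b * B + B)).card :=
            Finset.card_le_card hsub
        _ = B := by rw [Nat.card_Icc]; omega
    calc ∑ b ∈ Ψ.image g, (Ψ.filter fun k => g k = b).card ≤ ∑ b ∈ Ψ.image g, B :=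
          Finset.sum_le_sum hfib
      _ = (Ψ.image g).card * B := by rw [Finset.sum_const, smul_eq_mul]
      _ = B * (Ψ.image g).card := by ring
  have hV0 : (V 0).det = lam ^ d := by
    rw [hVdef]
    unfold designMat
    rw [show Finset.Icc 1 0 = (∅ : Finset ℕ) from Finset.Icc_eq_empty (by omega)]
    simp [Matrix.det_smul]
  have hmain : ∀ n : ℕ, (4:ℝ) ^ ((S.filter fun x => x < n).card) * lam ^ d ≤ (V (n * B)).det := by
    intro n
    induction n with
    | zero =>
      rw [show (S.filter fun x => x < 0) = ∅ by simp]
      simp [hV0]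
    | succ n ih =>
      by_cases hn : n ∈ S
      · obtain ⟨k, hkΨ, hgk⟩ := Finset.mem_image.mp (hSdef ▸ hn)
        have hbs : batchStart B k - 1 = n * B := by
          rw [hgdef] at hgk
          simp only at hgk
          simp only [batchStart, hgk]
          rw [Nat.add_sub_cancel, Nat.mul_comm]
        have hlt := hbad k hkΨ
        rw [hbs] at hlt
        have hk_le : k - 1 ≤ (n + 1) * B := by
          have h1 : (k - 1) / B < n + 1 := by
            rw [hgdef] at hgk; simp only at hgk; omega
          exact ((Nat.div_lt_iff_lt_mul hB).mp h1).le
        have hmono2 : (V (k - 1)).det ≤ (V ((n + 1) * B)).det := hmono hk_le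
        have hfc : ((S.filter fun x => x < n + 1).card) = (S.filter fun x => x < n).card + 1 := by
          have hins : (S.filter fun x => x < n + 1) = insert n (S.filter fun x => x < n) := by
            ext x
            simp only [Finset.mem_insert, Finset.mem_filter]
            constructor
            · rintro ⟨hxS, hxlt⟩
              rcases Nat.lt_succ_iff_lt_or_eq.mp hxlt with h | h
              · exact Or.inr ⟨hxS, h⟩
              · exact Or.inl h
            · rintro (rfl | ⟨hxS, hxlt⟩)
              · exact ⟨hn, Nat.lt_succ_self _⟩
              · exact ⟨hxS, Nat.lt_succ_of_lt hxlt⟩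
          rw [hins, Finset.card_insert_of_notMem (by simp)]
        rw [hfc, pow_succ]
        have h4nn : (0:ℝ) ≤ (4:ℝ) ^ (S.filter fun x => x < n).card := by positivity
        calc (4:ℝ) ^ (S.filter fun x => x < n).card * 4 * lam ^ d
            = 4 * ((4:ℝ) ^ (S.filter fun x => x < n).card * lam ^ d) := by ring
          _ ≤ 4 * (V (n * B)).det := by linarith
          _ ≤ (V (k - 1)).det := hlt.le
          _ ≤ (V ((n + 1) * B)).det := hmono2
      · have hfc : (S.filter fun x => x < n + 1) = (S.filter fun x => x < n) := by
          ext x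
          simp only [Finset.mem_filter]
          constructor
          · rintro ⟨hxS, hxlt⟩
            have hxn : x ≠ n := fun h => hn (h ▸ hxS)
            exact ⟨hxS, by omega⟩
          · rintro ⟨hxS, hxlt⟩
            exact ⟨hxS, Nat.lt_succ_of_lt hxlt⟩
        rw [hfc]
        exact ih.trans (hmono (Nat.mul_le_mul_right _ (Nat.le_succ n)))
  have hKB : (K / B) * B = K := Nat.div_mul_cancel hBK
  have hSfull : S.filter (fun x => x < K / B) = S := by
    apply Finset.filter_true_of_mem
    intro x hx
    obtain ⟨k, hkΨ, hgk⟩ := Finset.mem_image.mp (hSdef ▸ hx)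
    rw [hΨdef, Finset.mem_filter] at hkΨ
    have hkK := Finset.mem_Icc.mp hkΨ.1
    have hlt : k - 1 < K := by omega
    have := Nat.div_lt_div_of_lt_of_dvd hBK hlt
    rw [hgdef] at hgk
    simp only at hgk
    omega
  have hfinal1 : (4:ℝ) ^ S.card * lam ^ d ≤ (V K).det := by
    have := hmain (K / B)
    rwa [hSfull, hKB] at this
  -- Step C : determinant upper bound
  have htr : (V K).trace ≤ lam * d + K * H := by
    rw [hVdef, BadRoundAux.trace_designMat]
    have hsum : ∑ j ∈ Finset.Icc 1 K, φ j ⬝ᵥ φ j ≤ ∑ j ∈ Finset.Icc 1 K, H :=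
      Finset.sum_le_sum hφ
    rw [Finset.sum_const, Nat.card_Icc] at hsum
    simp only [Nat.add_sub_cancel, nsmul_eq_mul] at hsum
    linarith
  have hdetK : (V K).det ≤ ((lam * d + K * H) / d) ^ d :=
    BadRoundAux.det_le_trace_pow (hPD K) hd htr
  -- Step D : take logarithms
  have hdpos : (0:ℝ) < d := by exact_mod_cast hd
  have hKpos : (0:ℝ) < K := by exact_mod_cast hK
  set c : ℝ := 1 + K * H / (d * lam) with hcdef
  have hc1 : 1 < c := by
    have : 0 < (K:ℝ) * H / (d * lam) := by positivity
    rw [hcdef]; linarith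
  have hceq : (lam * d + K * H) / d = lam * c := by
    rw [hcdef]; field_simp
  have h4le : (4:ℝ) ^ S.card ≤ c ^ d := by
    have h1 : (4:ℝ) ^ S.card * lam ^ d ≤ lam ^ d * c ^ d := by
      have := hfinal1.trans hdetK
      rw [hceq, mul_pow] at this
      linarith
    have hlp : (0:ℝ) < lam ^ d := by positivity
    calc (4:ℝ) ^ S.card = (4:ℝ) ^ S.card * lam ^ d / lam ^ d := by field_simp
      _ ≤ lam ^ d * c ^ d / lam ^ d := by gcongr
      _ = c ^ d := by field_simp
  have hlog2 : 0 < Real.log 2 := Real.log_pos (by norm_num)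
  have hlogc : 0 ≤ Real.log c := Real.log_nonneg hc1.le
  have hlog : (S.card : ℝ) * (2 * Real.log 2) ≤ d * Real.log c := by
    have hl := Real.log_le_log (by positivity) h4le
    rw [Real.log_pow, Real.log_pow] at hl
    have h42 : Real.log 4 = 2 * Real.log 2 := by
      rw [show (4:ℝ) = 2 ^ 2 by norm_num, Real.log_pow]
      push_cast; ring
    rw [h42] at hl
    exact_mod_cast hl
  have hcardR : ((Ψ.card : ℕ) : ℝ) ≤ (B : ℝ) * S.card := by exact_mod_cast hcard
  calc (Ψ.card : ℝ) ≤ (B : ℝ) * S.card := hcardR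
    _ ≤ (B : ℝ) * (d * Real.log c / (2 * Real.log 2)) := by
        apply mul_le_mul_of_nonneg_left _ (by positivity)
        rw [le_div_iff₀ (by positivity)]
        exact hlog
    _ = ((B : ℝ) * d / (2 * Real.log 2)) * Real.log c := by ring
end
end

section
/- Let K, B, d be positive integers with B dividing K, and for k ∈ {1,…,K} let [k] := B·⌊(k−1)/B⌋ + 1. Let λ > 0 and let φ^(1),…,φ^(K), ψ^(1),…,ψ^(K) ∈ ℝ^d satisfy |⟨ψ^(k), φ^(k)⟩| ≤ 1 for all k. Define V_0 := λ·I_d, V_k := λ·I_d + ∑_{j=1}^{k} φ^(j)(φ^(j))ᵀ, and Ψ := {k ∈ {1,…,K} : ‖φ^(k)‖_{V_{[k]−1}^{-1}} > 2·‖φ^(k)‖_{V_{k−1}^{-1}}}. Then ∑_{k∉Ψ} |⟨ψ^(k), φ^(k)⟩| ≤ 2·√( ∑_{k=1}^K min{1, ‖φ^(k)‖²_{V_{k−1}^{-1}}} ) · √( ∑_{k=1}^K max{1, ‖ψ^(k)‖²_{V_{[k]−1}}} ). -/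
open scoped BigOperators Matrix

noncomputable section

lemma quad_vecMulVec {d : ℕ} (v x : Fin d → ℝ) :
    x ⬝ᵥ (Matrix.vecMulVec v v) *ᵥ x = (v ⬝ᵥ x) ^ 2 := by
  have h : (Matrix.vecMulVec v v) *ᵥ x = (v ⬝ᵥ x) • v := by
    ext i
    simp only [Matrix.mulVec, Matrix.vecMulVec_apply, Matrix.of_apply, dotProduct,
      Pi.smul_apply, smul_eq_mul, Finset.sum_mul, Finset.mul_sum]
    exact Finset.sum_congr rfl fun j _ => by ring
  rw [h, dotProduct_smul, smul_eq_mul, dotProduct_comm, sq]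

lemma dotProduct_sum' {d : ℕ} (x : Fin d → ℝ) (s : Finset ℕ) (w : ℕ → Fin d → ℝ) :
    x ⬝ᵥ (∑ j ∈ s, w j) = ∑ j ∈ s, x ⬝ᵥ w j := by
  simp only [dotProduct, Finset.sum_apply, Finset.mul_sum]
  exact Finset.sum_comm

lemma designMat_posDef {d : ℕ} {lam : ℝ} (hlam : 0 < lam) (φ : ℕ → Fin d → ℝ) (k : ℕ) :
    (designMat d lam φ k).PosDef := by
  rw [Matrix.posDef_iff_dotProduct_mulVec]
  constructor
  · show (designMat d lam φ k)ᴴ = designMat d lam φ k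
    unfold designMat
    ext i j
    simp only [Matrix.conjTranspose_apply, Matrix.add_apply, Matrix.smul_apply,
      Matrix.one_apply, Matrix.sum_apply, Matrix.vecMulVec_apply, Matrix.of_apply,
      star_trivial, smul_eq_mul]
    have h1 : (if j = i then (1:ℝ) else 0) = if i = j then 1 else 0 := by
      by_cases h : i = j <;> simp [h, Ne.symm]
    rw [h1]
    exact congrArg _ (Finset.sum_congr rfl fun l _ => mul_comm _ _)
  · intro x hx
    simp only [star_trivial]
    unfold designMat
    rw [Matrix.add_mulVec, dotProduct_add]
    have hsum : (∑ j ∈ Finset.Icc 1 k, Matrix.vecMulVec (φ j) (φ j)) *ᵥ x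
        = ∑ j ∈ Finset.Icc 1 k, (Matrix.vecMulVec (φ j) (φ j)) *ᵥ x := by
      ext i
      simp only [Matrix.mulVec, dotProduct, Matrix.sum_apply, Finset.sum_apply,
        Finset.sum_mul]
      exact Finset.sum_comm
    rw [hsum, dotProduct_sum']
    have h1 : x ⬝ᵥ (lam • (1 : Matrix (Fin d) (Fin d) ℝ)) *ᵥ x = lam * (x ⬝ᵥ x) := by
      rw [Matrix.smul_mulVec, Matrix.one_mulVec, dotProduct_smul, smul_eq_mul]
    have h2 : 0 < x ⬝ᵥ x := by
      have hnn : 0 ≤ x ⬝ᵥ x := Finset.sum_nonneg fun i _ => mul_self_nonneg _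
      rcases hnn.lt_or_eq with h | h
      · exact h
      · exact absurd (dotProduct_self_eq_zero.mp h.symm) hx
    have h3 : 0 ≤ ∑ j ∈ Finset.Icc 1 k, x ⬝ᵥ (Matrix.vecMulVec (φ j) (φ j)) *ᵥ x :=
      Finset.sum_nonneg fun j _ => by rw [quad_vecMulVec]; positivity
    rw [h1]
    have : 0 < lam * (x ⬝ᵥ x) := mul_pos hlam h2
    linarith

lemma psd_quad_nonneg {d : ℕ} {A : Matrix (Fin d) (Fin d) ℝ} (hA : A.PosSemidef)
    (x : Fin d → ℝ) : 0 ≤ x ⬝ᵥ A *ᵥ x := by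
  simpa using hA.dotProduct_mulVec_nonneg x

lemma psd_cauchy_schwarz {d : ℕ} {A : Matrix (Fin d) (Fin d) ℝ} (hA : A.PosSemidef)
    (x y : Fin d → ℝ) :
    |x ⬝ᵥ A *ᵥ y| ≤ Real.sqrt (x ⬝ᵥ A *ᵥ x) * Real.sqrt (y ⬝ᵥ A *ᵥ y) := by
  open scoped MatrixOrder in
  obtain ⟨B, hB⟩ := CStarAlgebra.nonneg_iff_eq_star_mul_self.mp hA.nonneg
  have key : ∀ u w : Fin d → ℝ, u ⬝ᵥ A *ᵥ w = (B *ᵥ u) ⬝ᵥ (B *ᵥ w) := by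
    intro u w
    rw [hB, Matrix.star_eq_conjTranspose, ← Matrix.mulVec_mulVec, Matrix.dotProduct_mulVec,
      Matrix.conjTranspose_eq_transpose_of_trivial, Matrix.vecMul_transpose]
  rw [key x y, key x x, key y y]
  set u := B *ᵥ x
  set w := B *ᵥ y
  have h1 : (u ⬝ᵥ w) ^ 2 ≤ (u ⬝ᵥ u) * (w ⬝ᵥ w) := by
    have := Finset.sum_mul_sq_le_sq_mul_sq Finset.univ u w
    simpa [dotProduct, sq] using this
  have h2 : |u ⬝ᵥ w| = Real.sqrt ((u ⬝ᵥ w) ^ 2) := (Real.sqrt_sq_eq_abs _).symm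
  have hu : 0 ≤ u ⬝ᵥ u := Finset.sum_nonneg fun i _ => mul_self_nonneg (u i)
  rw [h2, ← Real.sqrt_mul hu]
  exact Real.sqrt_le_sqrt h1

lemma abs_le_two_min_max {x a b : ℝ} (ha : 0 ≤ a) (hb : 0 ≤ b)
    (h1 : |x| ≤ 1) (h2 : |x| ≤ 2 * (b * a)) :
    |x| ≤ 2 * min 1 a * max 1 b := by
  rcases le_total 1 a with h | h
  · rw [min_eq_left h]
    have : (1:ℝ) ≤ max 1 b := le_max_left _ _
    nlinarith
  · rw [min_eq_right h]
    rcases le_total 1 b with h' | h'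
    · rw [max_eq_right h']; nlinarith
    · rw [max_eq_left h']; nlinarith

/-- Cauchy–Schwarz bound on the good rounds, established in the proof of
Lemma D.1 of the paper. -/
theorem good_round_cauchy_schwarz
    (K B d : ℕ) (hK : 0 < K) (hB : 0 < B) (hd : 0 < d) (hBK : B ∣ K)
    (lam : ℝ) (hlam : 0 < lam)
    (φ ψ : ℕ → Fin d → ℝ)
    (hpair : ∀ k ∈ Finset.Icc 1 K, |ψ k ⬝ᵥ φ k| ≤ 1) :
    ∑ k ∈ Finset.Icc 1 K \ ((Finset.Icc 1 K).filter fun k =>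
          2 * matNorm (designMat d lam φ (k - 1))⁻¹ (φ k) <
            matNorm (designMat d lam φ (batchStart B k - 1))⁻¹ (φ k)),
        |ψ k ⬝ᵥ φ k| ≤
      2 * Real.sqrt (∑ k ∈ Finset.Icc 1 K,
            min 1 (φ k ⬝ᵥ (designMat d lam φ (k - 1))⁻¹.mulVec (φ k))) *
        Real.sqrt (∑ k ∈ Finset.Icc 1 K,
            max 1 (ψ k ⬝ᵥ (designMat d lam φ (batchStart B k - 1)).mulVec (ψ k))) := by
  classical
  set V : ℕ → Matrix (Fin d) (Fin d) ℝ := designMat d lam φ with hV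
  -- abbreviations
  set a : ℕ → ℝ := fun k => matNorm (V (k - 1))⁻¹ (φ k) with ha
  set b : ℕ → ℝ := fun k => matNorm (V (batchStart B k - 1)) (ψ k) with hb
  have hVpd : ∀ m, (V m).PosDef := fun m => designMat_posDef hlam φ m
  have hVinvpsd : ∀ m, (V m)⁻¹.PosSemidef := fun m => ((hVpd m).inv).posSemidef
  have ha_nonneg : ∀ k, 0 ≤ a k := fun k => Real.sqrt_nonneg _
  have hb_nonneg : ∀ k, 0 ≤ b k := fun k => Real.sqrt_nonneg _
  -- per-round bound on good rounds
  have hround : ∀ k ∈ Finset.Icc 1 K \ ((Finset.Icc 1 K).filter fun k =>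
      2 * matNorm (V (k - 1))⁻¹ (φ k) <
        matNorm (V (batchStart B k - 1))⁻¹ (φ k)),
      |ψ k ⬝ᵥ φ k| ≤ 2 * min 1 (a k) * max 1 (b k) := by
    intro k hk
    rw [Finset.mem_sdiff, Finset.mem_filter] at hk
    obtain ⟨hk1, hk2⟩ := hk
    have hgood : matNorm (V (batchStart B k - 1))⁻¹ (φ k) ≤ 2 * a k := by
      by_contra h
      exact hk2 ⟨hk1, lt_of_not_ge h⟩
    set W := V (batchStart B k - 1) with hW
    have hWpd : W.PosDef := hVpd _
    have hdet : IsUnit W.det := isUnit_iff_ne_zero.mpr (ne_of_gt hWpd.det_pos)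
    have hkey : ψ k ⬝ᵥ φ k = ψ k ⬝ᵥ W *ᵥ (W⁻¹ *ᵥ φ k) := by
      rw [Matrix.mulVec_mulVec, Matrix.mul_nonsing_inv _ hdet, Matrix.one_mulVec]
    have hquad : (W⁻¹ *ᵥ φ k) ⬝ᵥ W *ᵥ (W⁻¹ *ᵥ φ k) = φ k ⬝ᵥ W⁻¹ *ᵥ φ k := by
      rw [Matrix.mulVec_mulVec, Matrix.mul_nonsing_inv _ hdet, Matrix.one_mulVec,
        dotProduct_comm]
    have hCS : |ψ k ⬝ᵥ φ k| ≤ b k * matNorm W⁻¹ (φ k) := by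
      rw [hkey]
      calc |ψ k ⬝ᵥ W *ᵥ (W⁻¹ *ᵥ φ k)|
          ≤ Real.sqrt (ψ k ⬝ᵥ W *ᵥ ψ k) *
            Real.sqrt ((W⁻¹ *ᵥ φ k) ⬝ᵥ W *ᵥ (W⁻¹ *ᵥ φ k)) :=
            psd_cauchy_schwarz hWpd.posSemidef _ _
        _ = b k * matNorm W⁻¹ (φ k) := by rw [hquad]; rfl
    have h2 : |ψ k ⬝ᵥ φ k| ≤ 2 * (b k * a k) := by
      calc |ψ k ⬝ᵥ φ k| ≤ b k * matNorm W⁻¹ (φ k) := hCS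
        _ ≤ b k * (2 * a k) := by
            exact mul_le_mul_of_nonneg_left hgood (hb_nonneg k)
        _ = 2 * (b k * a k) := by ring
    exact abs_le_two_min_max (ha_nonneg k) (hb_nonneg k) (hpair k hk1) h2
  -- sum over good rounds ≤ sum over all rounds
  have hterm_nonneg : ∀ k, 0 ≤ 2 * min 1 (a k) * max 1 (b k) := by
    intro k
    have h1 : (0:ℝ) ≤ min 1 (a k) := le_min zero_le_one (ha_nonneg k)
    have h2 : (0:ℝ) ≤ max 1 (b k) := le_trans zero_le_one (le_max_left _ _)
    positivity
  have hsum1 : ∑ k ∈ Finset.Icc 1 K \ ((Finset.Icc 1 K).filter fun k =>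
      2 * matNorm (V (k - 1))⁻¹ (φ k) <
        matNorm (V (batchStart B k - 1))⁻¹ (φ k)),
      |ψ k ⬝ᵥ φ k| ≤ ∑ k ∈ Finset.Icc 1 K, 2 * min 1 (a k) * max 1 (b k) := by
    calc _ ≤ ∑ k ∈ Finset.Icc 1 K \ ((Finset.Icc 1 K).filter fun k =>
          2 * matNorm (V (k - 1))⁻¹ (φ k) <
            matNorm (V (batchStart B k - 1))⁻¹ (φ k)),
          2 * min 1 (a k) * max 1 (b k) := Finset.sum_le_sum hround
      _ ≤ _ := Finset.sum_le_sum_of_subset_of_nonneg (Finset.sdiff_subset)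
          (fun k _ _ => hterm_nonneg k)
  -- Cauchy–Schwarz on the sums
  have hmin_sq : ∀ k, (min 1 (a k)) ^ 2 = min 1 (φ k ⬝ᵥ (V (k - 1))⁻¹ *ᵥ φ k) := by
    intro k
    have hq : 0 ≤ φ k ⬝ᵥ (V (k - 1))⁻¹ *ᵥ φ k := psd_quad_nonneg (hVinvpsd _) _
    have hsq : (a k) ^ 2 = φ k ⬝ᵥ (V (k - 1))⁻¹ *ᵥ φ k := Real.sq_sqrt hq
    rcases le_total (a k) 1 with h | h
    · rw [min_eq_right h, min_eq_right, hsq]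
      rw [← hsq]; nlinarith [ha_nonneg k]
    · rw [min_eq_left h, min_eq_left, one_pow]
      rw [← hsq]; nlinarith
  have hmax_sq : ∀ k, (max 1 (b k)) ^ 2 =
      max 1 (ψ k ⬝ᵥ (V (batchStart B k - 1)) *ᵥ ψ k) := by
    intro k
    have hq : 0 ≤ ψ k ⬝ᵥ (V (batchStart B k - 1)) *ᵥ ψ k :=
      psd_quad_nonneg (hVpd _).posSemidef _
    have hsq : (b k) ^ 2 = ψ k ⬝ᵥ (V (batchStart B k - 1)) *ᵥ ψ k := Real.sq_sqrt hq
    rcases le_total (b k) 1 with h | h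
    · rw [max_eq_left h, max_eq_left, one_pow]
      rw [← hsq]; nlinarith [hb_nonneg k]
    · rw [max_eq_right h, max_eq_right, hsq]
      rw [← hsq]; nlinarith
  have hCSsum : ∑ k ∈ Finset.Icc 1 K, min 1 (a k) * max 1 (b k) ≤
      Real.sqrt (∑ k ∈ Finset.Icc 1 K, min 1 (φ k ⬝ᵥ (V (k - 1))⁻¹ *ᵥ φ k)) *
      Real.sqrt (∑ k ∈ Finset.Icc 1 K,
        max 1 (ψ k ⬝ᵥ (V (batchStart B k - 1)) *ᵥ ψ k)) := by
    have h := Finset.sum_mul_sq_le_sq_mul_sq (Finset.Icc 1 K)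
      (fun k => min 1 (a k)) (fun k => max 1 (b k))
    have hnn : 0 ≤ ∑ k ∈ Finset.Icc 1 K, min 1 (a k) * max 1 (b k) := by
      apply Finset.sum_nonneg
      intro k _
      exact mul_nonneg (le_min zero_le_one (ha_nonneg k))
        (le_trans zero_le_one (le_max_left _ _))
    have := Real.sqrt_le_sqrt h
    rw [Real.sqrt_sq hnn] at this
    calc ∑ k ∈ Finset.Icc 1 K, min 1 (a k) * max 1 (b k)
        ≤ Real.sqrt ((∑ k ∈ Finset.Icc 1 K, (min 1 (a k)) ^ 2) *
            ∑ k ∈ Finset.Icc 1 K, (max 1 (b k)) ^ 2) := this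
      _ = _ := by
          rw [Real.sqrt_mul (Finset.sum_nonneg fun k _ => sq_nonneg _)]
          congr 2
          · exact Finset.sum_congr rfl fun k _ => hmin_sq k
          · exact Finset.sum_congr rfl fun k _ => hmax_sq k
  calc _ ≤ ∑ k ∈ Finset.Icc 1 K, 2 * min 1 (a k) * max 1 (b k) := hsum1
    _ = 2 * ∑ k ∈ Finset.Icc 1 K, min 1 (a k) * max 1 (b k) := by
        rw [Finset.mul_sum]; exact Finset.sum_congr rfl fun k _ => by ring
    _ ≤ 2 * (Real.sqrt (∑ k ∈ Finset.Icc 1 K,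
            min 1 (φ k ⬝ᵥ (V (k - 1))⁻¹ *ᵥ φ k)) *
          Real.sqrt (∑ k ∈ Finset.Icc 1 K,
            max 1 (ψ k ⬝ᵥ (V (batchStart B k - 1)) *ᵥ ψ k))) := by
        linarith [hCSsum]
    _ = _ := by rw [← mul_assoc]
end
end

section
/- Let V and W be d×d symmetric positive definite real matrices with V ⪯ W (i.e., W − V positive semidefinite), and let φ ∈ ℝ^d be a nonzero vector such that φᵀV⁻¹φ > 4·φᵀW⁻¹φ. Then det W > 4·det V. -/
open scoped Matrix

section aux

variable {d : ℕ}

/-- For a real symmetric matrix `S`, the dot product can be moved across `S`. -/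
lemma symm_dotProduct_mulVec (S : Matrix (Fin d) (Fin d) ℝ) (hS : S.IsHermitian)
    (x y : Fin d → ℝ) : x ⬝ᵥ (S *ᵥ y) = (S *ᵥ x) ⬝ᵥ y := by
  rw [Matrix.dotProduct_mulVec, ← Matrix.mulVec_transpose,
    ← Matrix.conjTranspose_eq_transpose_of_trivial, hS.eq]

end aux

/-- Determinant comparison step from the proof of Lemma D.1 of the paper:
if `V ⪯ W` are symmetric positive definite and some nonzero `φ` satisfies
`φᵀV⁻¹φ > 4·φᵀW⁻¹φ`, then `det W > 4·det V`. -/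
theorem det_comparison_of_norm_drop
    {d : ℕ} (V W : Matrix (Fin d) (Fin d) ℝ)
    (hV : V.PosDef) (hW : W.PosDef) (hVW : (W - V).PosSemidef)
    (φ : Fin d → ℝ) (hφ : φ ≠ 0)
    (h : 4 * (φ ⬝ᵥ W⁻¹.mulVec φ) < φ ⬝ᵥ V⁻¹.mulVec φ) :
    4 * V.det < W.det := by
  classical
  have hVi : (V⁻¹).PosDef := hV.inv
  set S : Matrix (Fin d) (Fin d) ℝ := (open scoped MatrixOrder in CFC.sqrt (V⁻¹)) with hSdef
  have hSpsd : S.PosSemidef := open scoped MatrixOrder in Matrix.nonneg_iff_posSemidef.mp (CFC.sqrt_nonneg (V⁻¹))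
  have hSh : S.IsHermitian := hSpsd.1
  have hSS : S * S = V⁻¹ := open scoped MatrixOrder in CFC.sqrt_mul_sqrt_self (V⁻¹) hVi.posSemidef.nonneg
  have hdV : 0 < V.det := hV.det_pos
  have hdVi : 0 < (V⁻¹).det := hVi.det_pos
  have hdS : IsUnit S.det := by
    rw [isUnit_iff_ne_zero]
    intro h0
    rw [← hSS, Matrix.det_mul, h0, mul_zero] at hdVi
    exact lt_irrefl _ hdVi
  -- `V = S⁻¹ * S⁻¹`
  have hVeq : V = S⁻¹ * S⁻¹ := by
    have : V⁻¹⁻¹ = (S * S)⁻¹ := by rw [hSS]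
    rwa [Matrix.nonsing_inv_nonsing_inv V (isUnit_iff_ne_zero.mpr (ne_of_gt hdV)),
      Matrix.mul_inv_rev] at this
  have hSVS : S * V * S = 1 := by
    rw [hVeq, show S * (S⁻¹ * S⁻¹) * S = (S * S⁻¹) * (S⁻¹ * S) from by noncomm_ring,
      Matrix.mul_nonsing_inv _ hdS, Matrix.nonsing_inv_mul _ hdS, one_mul]
  set M : Matrix (Fin d) (Fin d) ℝ := S * W * S with hMdef
  have hMpsd : M.PosSemidef := by
    have := hW.posSemidef.mul_mul_conjTranspose_same S
    rwa [hSh.eq] at this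
  have hMh : M.IsHermitian := hMpsd.1
  -- `M - 1` is PSD
  have hM1 : (M - 1).PosSemidef := by
    have := hVW.mul_mul_conjTranspose_same S
    rw [hSh.eq] at this
    have heq : S * (W - V) * S = M - 1 := by
      rw [Matrix.mul_sub, Matrix.sub_mul, hSVS, hMdef]
    rwa [heq] at this
  set μ : Fin d → ℝ := hMh.eigenvalues with hμdef
  -- every eigenvalue of `M` is at least 1
  have hμ1 : ∀ i, 1 ≤ μ i := by
    intro i
    set v : Fin d → ℝ := ⇑(hMh.eigenvectorBasis i) with hvdef
    have hv : M *ᵥ v = μ i • v := hMh.mulVec_eigenvectorBasis i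
    have hvne : v ≠ 0 := by
      intro h0
      have hb := hMh.eigenvectorBasis.toBasis.ne_zero i
      apply hb
      ext j
      exact congrFun h0 j
    have hvv : 0 < v ⬝ᵥ v := by
      rcases lt_or_eq_of_le (Finset.sum_nonneg fun j _ => mul_self_nonneg (v j)) with hlt | heq
      · exact hlt
      · exact absurd (dotProduct_self_eq_zero.mp heq.symm) hvne
    have h2 := hM1.dotProduct_mulVec_nonneg v
    rw [star_trivial, Matrix.sub_mulVec, Matrix.one_mulVec, hv, dotProduct_sub,
      dotProduct_smul] at h2
    have : 0 ≤ (μ i - 1) * (v ⬝ᵥ v) := by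
      have : μ i • (v ⬝ᵥ v) - v ⬝ᵥ v = (μ i - 1) * (v ⬝ᵥ v) := by ring_nf
      linarith [h2, this.symm ▸ h2]
    nlinarith
  have hμpos : ∀ i, 0 < μ i := fun i => lt_of_lt_of_le one_pos (hμ1 i)
  have hdetM : M.det = ∏ i, μ i := by
    have := hMh.det_eq_prod_eigenvalues
    simpa using this
  have hdetM1 : 1 ≤ M.det := by
    rw [hdetM]
    calc (1:ℝ) = ∏ _i : Fin d, (1:ℝ) := by simp
      _ ≤ ∏ i, μ i := Finset.prod_le_prod (fun _ _ => zero_le_one) (fun i _ => hμ1 i)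
  have hdetMpos : 0 < M.det := lt_of_lt_of_le one_pos hdetM1
  have hdMunit : IsUnit M.det := isUnit_iff_ne_zero.mpr (ne_of_gt hdetMpos)
  have hμle : ∀ i, μ i ≤ M.det := by
    intro i
    rw [hdetM, ← Finset.mul_prod_erase Finset.univ μ (Finset.mem_univ i)]
    have h1 : (1:ℝ) ≤ ∏ j ∈ Finset.univ.erase i, μ j := by
      calc (1:ℝ) = ∏ _j ∈ Finset.univ.erase i, (1:ℝ) := by simp
        _ ≤ _ := Finset.prod_le_prod (fun _ _ => zero_le_one) (fun j _ => hμ1 j)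
    nlinarith [hμpos i]
  set c : ℝ := (M.det)⁻¹ with hcdef
  have hcpos : 0 < c := inv_pos.mpr hdetMpos
  -- spectral decomposition pieces
  set U : Matrix (Fin d) (Fin d) ℝ := (hMh.eigenvectorUnitary : Matrix (Fin d) (Fin d) ℝ) with hUdef
  have hUU : U * star U = 1 := Matrix.mem_unitaryGroup_iff.mp hMh.eigenvectorUnitary.2
  have hUU' : star U * U = 1 := Matrix.mem_unitaryGroup_iff'.mp hMh.eigenvectorUnitary.2
  have hspec : M = U * Matrix.diagonal μ * star U := by
    have := hMh.spectral_theorem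
    simpa [Function.comp] using this
  have hMinv : M⁻¹ = U * Matrix.diagonal (fun i => (μ i)⁻¹) * star U := by
    apply Matrix.inv_eq_left_inv
    calc (U * Matrix.diagonal (fun i => (μ i)⁻¹) * star U) * M
        = U * Matrix.diagonal (fun i => (μ i)⁻¹) * (star U * U) * Matrix.diagonal μ * star U := by
          rw [hspec]; noncomm_ring
      _ = U * (Matrix.diagonal (fun i => (μ i)⁻¹) * Matrix.diagonal μ) * star U := by
          rw [hUU']; noncomm_ring
      _ = U * star U := by
          rw [Matrix.diagonal_mul_diagonal]
          have : (fun i => (μ i)⁻¹ * μ i) = fun _ => (1 : ℝ) := by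
            funext i; exact inv_mul_cancel₀ (ne_of_gt (hμpos i))
          rw [this, Matrix.diagonal_one, Matrix.mul_one]
      _ = 1 := hUU
  -- `M⁻¹ - c • 1` is PSD
  have hMinvPSD : (M⁻¹ - c • (1 : Matrix (Fin d) (Fin d) ℝ)).PosSemidef := by
    have heq : M⁻¹ - c • (1 : Matrix (Fin d) (Fin d) ℝ)
        = U * Matrix.diagonal (fun i => (μ i)⁻¹ - c) * Uᴴ := by
      have h1 : c • (1 : Matrix (Fin d) (Fin d) ℝ) = U * Matrix.diagonal (fun _ => c) * star U := by
        rw [← Matrix.smul_one_eq_diagonal, Matrix.mul_smul, Matrix.mul_one, Matrix.smul_mul, hUU]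
      rw [hMinv, h1, ← Matrix.star_eq_conjTranspose, ← Matrix.sub_mul, ← Matrix.mul_sub,
        Matrix.diagonal_sub]
    rw [heq]
    exact (Matrix.PosSemidef.diagonal fun i =>
      sub_nonneg.mpr (inv_anti₀ (hμpos i) (hμle i))).mul_mul_conjTranspose_same U
  -- relate the quadratic forms
  set ψ : Fin d → ℝ := S *ᵥ φ with hψdef
  have hVform : φ ⬝ᵥ V⁻¹ *ᵥ φ = ψ ⬝ᵥ ψ := by
    rw [← hSS, ← Matrix.mulVec_mulVec, symm_dotProduct_mulVec S hSh]
  have hWinvEq : W⁻¹ = S * M⁻¹ * S := by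
    rw [hMdef, Matrix.mul_inv_rev, Matrix.mul_inv_rev, ← Matrix.mul_assoc,
      ← Matrix.mul_assoc, Matrix.mul_nonsing_inv _ hdS, Matrix.one_mul,
      Matrix.mul_assoc, Matrix.nonsing_inv_mul _ hdS, Matrix.mul_one]
  have hWform : φ ⬝ᵥ W⁻¹ *ᵥ φ = ψ ⬝ᵥ M⁻¹ *ᵥ ψ := by
    rw [hWinvEq, ← Matrix.mulVec_mulVec, ← Matrix.mulVec_mulVec,
      symm_dotProduct_mulVec S hSh]
  have hppos : 0 < ψ ⬝ᵥ ψ := by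
    rw [← hVform]
    have := hVi.dotProduct_mulVec_pos hφ
    rwa [star_trivial] at this
  -- the key inequality
  have hkey : c * (ψ ⬝ᵥ ψ) ≤ ψ ⬝ᵥ M⁻¹ *ᵥ ψ := by
    have h2 := hMinvPSD.dotProduct_mulVec_nonneg ψ
    rw [star_trivial, Matrix.sub_mulVec, dotProduct_sub, Matrix.smul_mulVec,
      Matrix.one_mulVec, dotProduct_smul, smul_eq_mul] at h2
    linarith
  -- conclude
  have h4c : 4 * c < 1 := by
    have h1 : 4 * (c * (ψ ⬝ᵥ ψ)) ≤ 4 * (ψ ⬝ᵥ M⁻¹ *ᵥ ψ) := by linarith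
    rw [← hWform] at h1
    have h2 : 4 * (c * (ψ ⬝ᵥ ψ)) < ψ ⬝ᵥ ψ := by
      calc 4 * (c * (ψ ⬝ᵥ ψ)) ≤ 4 * (φ ⬝ᵥ W⁻¹ *ᵥ φ) := h1
        _ < φ ⬝ᵥ V⁻¹ *ᵥ φ := h
        _ = ψ ⬝ᵥ ψ := hVform
    nlinarith
  have hdetM4 : 4 < M.det := by
    have : c * M.det = 1 := inv_mul_cancel₀ (ne_of_gt hdetMpos)
    nlinarith
  have hdetrel : M.det * V.det = W.det := by
    have h1 : M.det = (V⁻¹).det * W.det := by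
      rw [hMdef, Matrix.det_mul, Matrix.det_mul]
      have hss : S.det * S.det = (V⁻¹).det := by rw [← Matrix.det_mul, hSS]
      rw [← hss]; ring
    have h2 : (V⁻¹).det * V.det = 1 := by
      rw [Matrix.det_nonsing_inv, Ring.inverse_eq_inv', inv_mul_cancel₀ (ne_of_gt hdV)]
    calc M.det * V.det = (V⁻¹).det * W.det * V.det := by rw [h1]
      _ = ((V⁻¹).det * V.det) * W.det := by ring
      _ = W.det := by rw [h2, one_mul]
  nlinarith [hdetM4, hdV, hdetrel]
end
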